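/- arXiv:1909.00320 — 6 statements merged into one kernel-verified Lean document; each statement's English description precedes it below -/
import Mathlib

section
/- Let A be an (m+1)×(m+1) real symmetric matrix with smallest eigenvalue λ₁. Then the maximum over unit vectors x ∈ ℝ^{m+1} of the squared Frobenius distance ‖x xᵀ − A‖₀² equals Tr(A²) + 1 − 2 λ₁, and a unit vector x attains this maximum if and only if x is an eigenvector of A corresponding to the eigenvalue λ₁. -/
open Matrix

private lemma trace_vecMulVec_mul' {n : ℕ} (x y : Fin n → ℝ) (M : Matrix (Fin n) (Fin n) ℝ) :
    Matrix.trace (vecMulVec x y * M) = y ⬝ᵥ (M *ᵥ x) := by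
  simp only [Matrix.trace, Matrix.diag, Matrix.mul_apply, vecMulVec_apply, dotProduct, mulVec,
    dotProduct, Finset.mul_sum]
  rw [Finset.sum_comm]
  apply Finset.sum_congr rfl; intro j _
  apply Finset.sum_congr rfl; intro i _; ring

private lemma vecMulVec_mulVec' {n : ℕ} (x y z : Fin n → ℝ) :
    vecMulVec x y *ᵥ z = (y ⬝ᵥ z) • x := by
  funext i
  simp only [mulVec, dotProduct, vecMulVec_apply, Pi.smul_apply, smul_eq_mul]
  rw [Finset.sum_mul]
  apply Finset.sum_congr rfl; intro j _; ring

private lemma trace_expand {n : ℕ} (A : Matrix (Fin n) (Fin n) ℝ) (x : Fin n → ℝ)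
    (hx : x ⬝ᵥ x = 1) :
    Matrix.trace ((vecMulVec x x - A) * (vecMulVec x x - A))
      = Matrix.trace (A * A) + 1 - 2 * (x ⬝ᵥ (A *ᵥ x)) := by
  have h1 : Matrix.trace (vecMulVec x x * vecMulVec x x) = 1 := by
    rw [trace_vecMulVec_mul', vecMulVec_mulVec', hx, one_smul, hx]
  have h2 : Matrix.trace (vecMulVec x x * A) = x ⬝ᵥ (A *ᵥ x) := trace_vecMulVec_mul' x x A
  have h3 : Matrix.trace (A * vecMulVec x x) = x ⬝ᵥ (A *ᵥ x) := by
    rw [Matrix.trace_mul_comm]; exact h2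
  rw [sub_mul, mul_sub, mul_sub, Matrix.trace_sub, Matrix.trace_sub, Matrix.trace_sub,
    h1, h2, h3]
  ring

/-- Let `A` be an `(m+1)×(m+1)` real symmetric matrix with smallest
eigenvalue `λ₁`. Then the maximum over unit vectors `x` of `Tr((x xᵀ - A)²)` equals
`Tr(A²) + 1 - 2 λ₁`, and a unit vector `x` attains it iff `x` is an eigenvector of `A`
for the eigenvalue `λ₁`. -/
theorem vw_farthest_distance (m : ℕ) (A : Matrix (Fin (m + 1)) (Fin (m + 1)) ℝ)
    (hA : A.IsSymm) (lam : ℝ)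
    (hev : ∃ v : Fin (m + 1) → ℝ, v ⬝ᵥ v = 1 ∧ A *ᵥ v = lam • v)
    (hmin : ∀ (c : ℝ) (w : Fin (m + 1) → ℝ), w ≠ 0 → A *ᵥ w = c • w → lam ≤ c) :
    IsGreatest {t : ℝ | ∃ x : Fin (m + 1) → ℝ, x ⬝ᵥ x = 1 ∧
        t = Matrix.trace ((vecMulVec x x - A) * (vecMulVec x x - A))}
      (Matrix.trace (A * A) + 1 - 2 * lam) ∧
    (∀ x : Fin (m + 1) → ℝ, x ⬝ᵥ x = 1 →
      (Matrix.trace ((vecMulVec x x - A) * (vecMulVec x x - A))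
          = Matrix.trace (A * A) + 1 - 2 * lam ↔ A *ᵥ x = lam • x)) := by
  -- `B = A - lam • 1` is positive semidefinite
  set B : Matrix (Fin (m + 1)) (Fin (m + 1)) ℝ := A - lam • 1 with hBdef
  have hAh : A.IsHermitian := by
    rwa [Matrix.IsHermitian, conjTranspose_eq_transpose_of_trivial]
  have hBh : B.IsHermitian := by
    rw [Matrix.IsHermitian, conjTranspose_eq_transpose_of_trivial, transpose_sub,
      transpose_smul, transpose_one, hA]
  have hBmul : ∀ z : Fin (m + 1) → ℝ, B *ᵥ z = A *ᵥ z - lam • z := by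
    intro z
    rw [hBdef, Matrix.sub_mulVec, Matrix.smul_mulVec, Matrix.one_mulVec]
  have hBpsd : B.PosSemidef := by
    rw [hBh.posSemidef_iff_eigenvalues_nonneg]
    intro i
    show (0:ℝ) ≤ _
    set v : Fin (m + 1) → ℝ := ⇑(hBh.eigenvectorBasis i) with hv
    have hvne : v ≠ 0 := by
      intro h0
      have h1 : hBh.eigenvectorBasis i = 0 := by
        apply (WithLp.equiv 2 _).injective
        simpa [hv] using h0
      exact (hBh.eigenvectorBasis).toBasis.ne_zero i (by simpa using h1)
    have hBv : B *ᵥ v = hBh.eigenvalues i • v := hBh.mulVec_eigenvectorBasis i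
    have hAv : A *ᵥ v = (hBh.eigenvalues i + lam) • v := by
      have := hBmul v
      rw [hBv] at this
      funext j
      have := congrFun this j
      simp only [Pi.sub_apply, Pi.smul_apply, smul_eq_mul] at this
      simp only [Pi.smul_apply, smul_eq_mul]
      linarith
    have := hmin _ v hvne hAv
    linarith
  -- key inequality/equality characterization
  have key : ∀ x : Fin (m + 1) → ℝ, x ⬝ᵥ x = 1 →
      lam ≤ x ⬝ᵥ (A *ᵥ x) ∧ (x ⬝ᵥ (A *ᵥ x) = lam ↔ A *ᵥ x = lam • x) := by
    intro x hx
    have hquad : x ⬝ᵥ (B *ᵥ x) = x ⬝ᵥ (A *ᵥ x) - lam := by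
      rw [hBmul, dotProduct_sub, dotProduct_smul, smul_eq_mul, hx, mul_one]
    have hnn : 0 ≤ x ⬝ᵥ (B *ᵥ x) := by
      have := hBpsd.dotProduct_mulVec_nonneg x
      simpa using this
    constructor
    · linarith
    · constructor
      · intro h
        have h0 : x ⬝ᵥ (B *ᵥ x) = 0 := by rw [hquad, h]; ring
        have := (hBpsd.dotProduct_mulVec_zero_iff x).mp (by simpa using h0)
        have hx2 := hBmul x
        rw [this] at hx2
        funext j
        have := congrFun hx2 j
        simp only [Pi.zero_apply, Pi.sub_apply, Pi.smul_apply, smul_eq_mul] at this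
        simp only [Pi.smul_apply, smul_eq_mul]
        linarith
      · intro h
        rw [h, dotProduct_smul, smul_eq_mul, hx, mul_one]
  obtain ⟨v, hv1, hv2⟩ := hev
  have hvval : v ⬝ᵥ (A *ᵥ v) = lam := by
    rw [hv2, dotProduct_smul, smul_eq_mul, hv1, mul_one]
  refine ⟨⟨⟨v, hv1, ?_⟩, ?_⟩, ?_⟩
  · rw [trace_expand A v hv1, hvval]
  · rintro t ⟨x, hx, rfl⟩
    rw [trace_expand A x hx]
    have := (key x hx).1
    linarith
  · intro x hx
    rw [trace_expand A x hx]
    have h1 := (key x hx).2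
    constructor
    · intro h
      exact h1.mp (by linarith)
    · intro h
      rw [h1.mpr h]
end

section
/- Let A be an (m+1)×(m+1) real symmetric matrix with smallest eigenvalue λ₁. The set of unit vectors x maximizing ‖x xᵀ − A‖₀² consists of exactly two antipodal vectors {v, −v} (equivalently, the maximizer x xᵀ in j(ℝP^m) is unique) if and only if λ₁ is a simple eigenvalue of A; in that case the unique farthest point of j(ℝP^m) from A is P_{F,j}(A) = v vᵀ, where v is a unit eigenvector of A corresponding to λ₁. -/
open Matrix

set_option linter.unusedSectionVars false


variable {n : Type*} [Fintype n] [DecidableEq n]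

lemma vmv_mulVec (a b c : n → ℝ) : vecMulVec a b *ᵥ c = (b ⬝ᵥ c) • a := by
  ext i
  simp [vecMulVec_apply, mulVec, dotProduct, Finset.sum_mul, mul_assoc, mul_comm, mul_left_comm, Finset.mul_sum]

lemma trace_vmv_mul (a b : n → ℝ) (M : Matrix n n ℝ) :
    Matrix.trace (vecMulVec a b * M) = b ⬝ᵥ (M *ᵥ a) := by
  simp only [Matrix.trace, Matrix.diag, Matrix.mul_apply, vecMulVec_apply, dotProduct,
    Matrix.mulVec, Finset.mul_sum]
  rw [Finset.sum_comm]
  exact Finset.sum_congr rfl fun j _ => Finset.sum_congr rfl fun i _ => by ring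

lemma trace_formula (A : Matrix n n ℝ) (x : n → ℝ) (hx : x ⬝ᵥ x = 1) :
    Matrix.trace ((vecMulVec x x - A) * (vecMulVec x x - A))
      = Matrix.trace (A * A) + 1 - 2 * (x ⬝ᵥ (A *ᵥ x)) := by
  have e : (vecMulVec x x - A) * (vecMulVec x x - A)
      = vecMulVec x x * vecMulVec x x - vecMulVec x x * A - A * vecMulVec x x + A * A := by
    noncomm_ring
  rw [e, Matrix.trace_add, Matrix.trace_sub, Matrix.trace_sub,
    trace_vmv_mul x x (vecMulVec x x), trace_vmv_mul x x A,
    Matrix.trace_mul_comm A (vecMulVec x x), trace_vmv_mul x x A, vmv_mulVec,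
    dotProduct_smul, hx]
  simp [smul_eq_mul]; ring

lemma shifted_psd (A : Matrix n n ℝ) (hA : A.IsSymm) (lam : ℝ)
    (hmin : ∀ (c : ℝ) (w : n → ℝ), w ≠ 0 → A *ᵥ w = c • w → lam ≤ c) :
    (A - lam • (1 : Matrix n n ℝ)).PosSemidef := by
  have hAH : A.IsHermitian := hA
  have hBH : (A - lam • (1 : Matrix n n ℝ)).IsHermitian := by
    refine hAH.sub ?_
    simp [Matrix.IsHermitian, Matrix.conjTranspose_smul]
  refine hBH.posSemidef_iff_eigenvalues_nonneg.mpr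
    (show ∀ i, (0:ℝ) ≤ hBH.eigenvalues i from fun i => ?_)
  set w : n → ℝ := ⇑(hBH.eigenvectorBasis i) with hw
  have hwe : (A - lam • (1 : Matrix n n ℝ)) *ᵥ w = hBH.eigenvalues i • w :=
    hBH.mulVec_eigenvectorBasis i
  have hwne : w ≠ 0 := by
    intro h
    have := (hBH.eigenvectorBasis).orthonormal.ne_zero i
    apply this
    ext j
    exact congrFun h j
  have hAw : A *ᵥ w = (hBH.eigenvalues i + lam) • w := by
    have : A *ᵥ w - lam • w = hBH.eigenvalues i • w := by
      simpa [Matrix.sub_mulVec, Matrix.smul_mulVec, Matrix.one_mulVec] using hwe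
    have := sub_eq_iff_eq_add.mp this
    rw [this, add_smul, add_comm]
  have := hmin _ _ hwne hAw
  linarith

lemma rayleigh_lb (A : Matrix n n ℝ) (hA : A.IsSymm) (lam : ℝ)
    (hmin : ∀ (c : ℝ) (w : n → ℝ), w ≠ 0 → A *ᵥ w = c • w → lam ≤ c) (x : n → ℝ) :
    lam * (x ⬝ᵥ x) ≤ x ⬝ᵥ (A *ᵥ x) := by
  have h := (shifted_psd A hA lam hmin).dotProduct_mulVec_nonneg x
  simp only [star_trivial, Matrix.sub_mulVec, Matrix.smul_mulVec, Matrix.one_mulVec,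
    dotProduct_sub, dotProduct_smul, smul_eq_mul] at h
  linarith

lemma rayleigh_eq (A : Matrix n n ℝ) (hA : A.IsSymm) (lam : ℝ)
    (hmin : ∀ (c : ℝ) (w : n → ℝ), w ≠ 0 → A *ᵥ w = c • w → lam ≤ c) (x : n → ℝ)
    (h : x ⬝ᵥ (A *ᵥ x) = lam * (x ⬝ᵥ x)) : A *ᵥ x = lam • x := by
  have hp := shifted_psd A hA lam hmin
  have h0 : star x ⬝ᵥ (A - lam • (1 : Matrix n n ℝ)) *ᵥ x = 0 := by
    simp only [star_trivial, Matrix.sub_mulVec, Matrix.smul_mulVec, Matrix.one_mulVec,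
      dotProduct_sub, dotProduct_smul, smul_eq_mul]
    linarith
  have := (hp.dotProduct_mulVec_zero_iff x).mp h0
  have : A *ᵥ x - lam • x = 0 := by
    simpa [Matrix.sub_mulVec, Matrix.smul_mulVec, Matrix.one_mulVec] using this
  exact sub_eq_zero.mp this

lemma vmv_neg (v : n → ℝ) : vecMulVec (-v) (-v) = vecMulVec v v := by
  ext i j; simp [vecMulVec_apply]

lemma max_iff_eig (A : Matrix n n ℝ) (hA : A.IsSymm) (lam : ℝ)
    (hev : ∃ v : n → ℝ, v ⬝ᵥ v = 1 ∧ A *ᵥ v = lam • v)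
    (hmin : ∀ (c : ℝ) (w : n → ℝ), w ≠ 0 → A *ᵥ w = c • w → lam ≤ c)
    (x : n → ℝ) (hx : x ⬝ᵥ x = 1) :
    (∀ y : n → ℝ, y ⬝ᵥ y = 1 →
        Matrix.trace ((vecMulVec y y - A) * (vecMulVec y y - A))
          ≤ Matrix.trace ((vecMulVec x x - A) * (vecMulVec x x - A))) ↔
      A *ᵥ x = lam • x := by
  constructor
  · intro h
    obtain ⟨v, hv1, hv2⟩ := hev
    have hcomp := h v hv1
    rw [trace_formula A x hx, trace_formula A v hv1] at hcomp
    have hqv : v ⬝ᵥ (A *ᵥ v) = lam := by rw [hv2, dotProduct_smul, hv1]; simp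
    have hlb := rayleigh_lb A hA lam hmin x
    rw [hx] at hlb
    apply rayleigh_eq A hA lam hmin
    rw [hx]
    simp only [mul_one] at hlb ⊢
    linarith
  · intro hx2 y hy
    rw [trace_formula A x hx, trace_formula A y hy]
    have hqx : x ⬝ᵥ (A *ᵥ x) = lam := by rw [hx2, dotProduct_smul, hx]; simp
    have hlb := rayleigh_lb A hA lam hmin y
    rw [hy] at hlb
    simp only [mul_one] at hlb
    linarith

lemma eig_of_vmv_eq (A : Matrix n n ℝ) (lam : ℝ) (v x : n → ℝ)
    (hv1 : v ⬝ᵥ v = 1) (hv2 : A *ᵥ v = lam • v) (hx : x ⬝ᵥ x = 1)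
    (h : vecMulVec x x = vecMulVec v v) : A *ᵥ x = lam • x := by
  have h1 : (x ⬝ᵥ v) • x = v := by
    have := congrArg (fun M => M *ᵥ v) h
    simpa [vmv_mulVec, hv1] using this
  set c := x ⬝ᵥ v with hc
  have hc2 : c * c = 1 := by
    have : v ⬝ᵥ v = (c • x) ⬝ᵥ (c • x) := by rw [h1]
    rw [hv1] at this
    simpa [smul_dotProduct, dotProduct_smul, smul_eq_mul, hx, mul_assoc] using this.symm
  have hcne : c ≠ 0 := by intro h0; rw [h0] at hc2; simp at hc2
  have hxv : x = c⁻¹ • v := by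
    rw [← h1, smul_smul, inv_mul_cancel₀ hcne, one_smul]
  rw [hxv, Matrix.mulVec_smul, hv2, smul_comm]



/-- Let `A` be an `(m+1)×(m+1)` real symmetric matrix with smallest
eigenvalue `λ₁`. The set of unit vectors maximizing `Tr((x xᵀ - A)²)` consists of
exactly two antipodal vectors `{v, -v}` iff `λ₁` is a simple eigenvalue (formulated:
any two unit `λ₁`-eigenvectors agree up to sign); in that case, for `v` a unit
eigenvector for `λ₁`, the unique farthest point of `j(ℝP^m)` from `A` is `v vᵀ`:
a unit vector `x` is a maximizer iff `x xᵀ = v vᵀ`. -/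
theorem vw_farthest_projection_unique_iff_simple (m : ℕ)
    (A : Matrix (Fin (m + 1)) (Fin (m + 1)) ℝ) (hA : A.IsSymm) (lam : ℝ)
    (hev : ∃ v : Fin (m + 1) → ℝ, v ⬝ᵥ v = 1 ∧ A *ᵥ v = lam • v)
    (hmin : ∀ (c : ℝ) (w : Fin (m + 1) → ℝ), w ≠ 0 → A *ᵥ w = c • w → lam ≤ c) :
    ((∃ v : Fin (m + 1) → ℝ,
        {x : Fin (m + 1) → ℝ | x ⬝ᵥ x = 1 ∧ ∀ y : Fin (m + 1) → ℝ, y ⬝ᵥ y = 1 →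
            Matrix.trace ((vecMulVec y y - A) * (vecMulVec y y - A))
              ≤ Matrix.trace ((vecMulVec x x - A) * (vecMulVec x x - A))}
          = {v, -v}) ↔
      (∀ w u : Fin (m + 1) → ℝ, w ⬝ᵥ w = 1 → u ⬝ᵥ u = 1 →
        A *ᵥ w = lam • w → A *ᵥ u = lam • u → (w = u ∨ w = -u))) ∧
    ((∀ w u : Fin (m + 1) → ℝ, w ⬝ᵥ w = 1 → u ⬝ᵥ u = 1 →
        A *ᵥ w = lam • w → A *ᵥ u = lam • u → (w = u ∨ w = -u)) →
      ∀ v : Fin (m + 1) → ℝ, v ⬝ᵥ v = 1 → A *ᵥ v = lam • v →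
        ∀ x : Fin (m + 1) → ℝ, x ⬝ᵥ x = 1 →
          ((∀ y : Fin (m + 1) → ℝ, y ⬝ᵥ y = 1 →
              Matrix.trace ((vecMulVec y y - A) * (vecMulVec y y - A))
                ≤ Matrix.trace ((vecMulVec x x - A) * (vecMulVec x x - A))) ↔
            vecMulVec x x = vecMulVec v v)) := by
  constructor
  · constructor
    · rintro ⟨v, hset⟩ w u hw hu hw2 hu2
      have hwmem : w ∈ ({v, -v} : Set (Fin (m + 1) → ℝ)) := by
        rw [← hset]; exact ⟨hw, (max_iff_eig A hA lam hev hmin w hw).mpr hw2⟩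
      have humem : u ∈ ({v, -v} : Set (Fin (m + 1) → ℝ)) := by
        rw [← hset]; exact ⟨hu, (max_iff_eig A hA lam hev hmin u hu).mpr hu2⟩
      simp only [Set.mem_insert_iff, Set.mem_singleton_iff] at hwmem humem
      rcases hwmem with h1 | h1 <;> rcases humem with h2 | h2
      · left; rw [h1, h2]
      · right; rw [h1, h2, neg_neg]
      · right; rw [h1, h2]
      · left; rw [h1, h2]
    · intro hs
      obtain ⟨v, hv1, hv2⟩ := hev
      refine ⟨v, ?_⟩
      ext x
      simp only [Set.mem_setOf_eq, Set.mem_insert_iff, Set.mem_singleton_iff]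
      constructor
      · rintro ⟨hx, hmax⟩
        exact hs x v hx hv1 ((max_iff_eig A hA lam ⟨v, hv1, hv2⟩ hmin x hx).mp hmax) hv2
      · rintro (h | h) <;> rw [h]
        · exact ⟨hv1, (max_iff_eig A hA lam ⟨v, hv1, hv2⟩ hmin v hv1).mpr hv2⟩
        · have hnv1 : (-v) ⬝ᵥ (-v) = 1 := by simpa using hv1
          have hnv2 : A *ᵥ (-v) = lam • (-v) := by
            rw [Matrix.mulVec_neg, hv2, smul_neg]
          exact ⟨hnv1, (max_iff_eig A hA lam ⟨v, hv1, hv2⟩ hmin (-v) hnv1).mpr hnv2⟩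
  · intro hs v hv1 hv2 x hx
    constructor
    · intro hmax
      have hx2 := (max_iff_eig A hA lam ⟨v, hv1, hv2⟩ hmin x hx).mp hmax
      rcases hs x v hx hv1 hx2 hv2 with h | h
      · rw [h]
      · rw [h, vmv_neg]
    · intro h
      exact (max_iff_eig A hA lam ⟨v, hv1, hv2⟩ hmin x hx).mpr
        (eig_of_vmv_eq A lam v x hv1 hv2 hx h)
end

section
/- Let Q be a probability measure on the unit sphere S^m ⊂ ℝ^{m+1} and let μ = ∫ x xᵀ Q(dx) be the second moment matrix. Then a unit vector v ∈ ℝ^{m+1} maximizes the Fréchet function F(p) = ∫ ‖p pᵀ − x xᵀ‖₀² Q(dx) over unit vectors p if and only if v is an eigenvector of μ corresponding to the smallest eigenvalue λ(1) of μ. Equivalently, the VW antimean set of Q on ℝP^m is the set of points [v] with v a unit vector in the eigenspace of μ for λ(1). -/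
open Matrix MeasureTheory
open scoped RealInnerProductSpace

section Rayleigh

variable {n : ℕ}

private lemma norm_e_eq_one {y : Fin n → ℝ} (hy : y ⬝ᵥ y = 1) :
    ‖(WithLp.equiv 2 (Fin n → ℝ)).symm y‖ = 1 := by
  have h : @inner ℝ _ _ ((WithLp.equiv 2 (Fin n → ℝ)).symm y) ((WithLp.equiv 2 (Fin n → ℝ)).symm y) = 1 := by
    change y ⬝ᵥ star y = 1
    simpa using hy
  rw [real_inner_self_eq_norm_sq] at h
  nlinarith [norm_nonneg ((WithLp.equiv 2 (Fin n → ℝ)).symm y)]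

private lemma reApply_eq (μ : Matrix (Fin n) (Fin n) ℝ) (y : Fin n → ℝ) :
    (Matrix.toEuclideanCLM (𝕜 := ℝ) μ).reApplyInnerSelf
        ((WithLp.equiv 2 (Fin n → ℝ)).symm y) = y ⬝ᵥ (μ *ᵥ y) := by
  rw [ContinuousLinearMap.reApplyInnerSelf_apply]
  rw [real_inner_comm, Matrix.inner_toEuclideanCLM]
  simp [PiLp.inner_apply, dotProduct, Matrix.toLin'_apply, mul_comm]

private lemma rayleigh_min_iff (μ : Matrix (Fin n) (Fin n) ℝ)
    (hsym : ∀ i j, μ i j = μ j i) (v : Fin n → ℝ) (hv : v ⬝ᵥ v = 1) :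
    (∀ p : Fin n → ℝ, p ⬝ᵥ p = 1 → v ⬝ᵥ (μ *ᵥ v) ≤ p ⬝ᵥ (μ *ᵥ p)) ↔
    (∃ lam : ℝ, μ *ᵥ v = lam • v ∧
      ∀ (c : ℝ) (w : Fin n → ℝ), w ≠ 0 → μ *ᵥ w = c • w → lam ≤ c) := by
  set T := Matrix.toEuclideanCLM (𝕜 := ℝ) μ with hT_def
  have hμH : μ.IsHermitian := by
    ext i j
    simp [Matrix.conjTranspose_apply, hsym j i]
  have hT : IsSelfAdjoint T := by
    rw [_root_.IsSelfAdjoint, hT_def, ← map_star]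
    congr 1
  set e := (WithLp.equiv 2 (Fin n → ℝ)).symm with he_def
  constructor
  · intro hmin
    have hnv : ‖e v‖ = 1 := norm_e_eq_one hv
    have hx0 : e v ≠ 0 := by
      intro h
      rw [h, norm_zero] at hnv
      norm_num at hnv
    have hextr : IsMinOn T.reApplyInnerSelf (Metric.sphere (0 : EuclideanSpace ℝ (Fin n)) ‖e v‖) (e v) := by
      intro y hy
      have hny : ‖y‖ = 1 := by
        rw [mem_sphere_zero_iff_norm] at hy
        rw [hy, hnv]
      set p : Fin n → ℝ := WithLp.equiv 2 (Fin n → ℝ) y with hp_def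
      have hyp : y = e p := by simp [he_def, hp_def]
      have hpp : p ⬝ᵥ p = 1 := by
        have h : @inner ℝ _ _ y y = 1 := by
          rw [real_inner_self_eq_norm_sq, hny]; norm_num
        rw [hyp, he_def] at h
        change p ⬝ᵥ star p = 1 at h
        simpa using h
      have := hmin p hpp
      simp only [Set.mem_setOf_eq, hyp, he_def, hT_def, reApply_eq]
      exact this
    have heig : T (e v) = (T.rayleighQuotient (e v) : ℝ) • (e v) :=
      hT.eq_smul_self_of_isLocalExtrOn (Or.inl hextr.localize)
    set lam : ℝ := T.rayleighQuotient (e v) with hlam_def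
    have hlam : lam = v ⬝ᵥ (μ *ᵥ v) := by
      rw [hlam_def, ContinuousLinearMap.rayleighQuotient, hnv]
      simp [he_def, hT_def, reApply_eq]
      exact reApply_eq μ v
    refine ⟨lam, ?_, ?_⟩
    · have := congrArg (WithLp.equiv 2 (Fin n → ℝ)) heig
      simpa [he_def, hT_def, Matrix.toLin'_apply] using this
    · intro c w hw hcw
      have hww0 : (0:ℝ) ≤ w ⬝ᵥ w :=
        Finset.sum_nonneg fun i _ => mul_self_nonneg (w i)
      have hww : (0:ℝ) < w ⬝ᵥ w := by
        rcases lt_or_eq_of_le hww0 with h | h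
        · exact h
        · exact absurd ((dotProduct_self_eq_zero).1 h.symm) hw
      set s := Real.sqrt (w ⬝ᵥ w) with hs_def
      have hs : 0 < s := Real.sqrt_pos.2 hww
      have hs2 : s * s = w ⬝ᵥ w := Real.mul_self_sqrt hww.le
      set p := s⁻¹ • w with hp_def
      have hsne : s ≠ 0 := ne_of_gt hs
      have hpp : p ⬝ᵥ p = 1 := by
        rw [hp_def, smul_dotProduct, dotProduct_smul, smul_eq_mul, smul_eq_mul,
          ← hs2]
        field_simp
      have hqp : p ⬝ᵥ (μ *ᵥ p) = c := by
        rw [hp_def, Matrix.mulVec_smul, hcw, smul_dotProduct, dotProduct_smul,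
          dotProduct_smul, smul_eq_mul, smul_eq_mul, smul_eq_mul, ← hs2]
        field_simp
      have := hmin p hpp
      rw [hqp] at this
      linarith [hlam]
  · rintro ⟨lam, hev, hmineig⟩ p hp
    have hqv : v ⬝ᵥ (μ *ᵥ v) = lam := by
      rw [hev, dotProduct_smul, smul_eq_mul, hv, mul_one]
    rw [hqv]
    -- find a minimizer of the Rayleigh quotient on the sphere
    have hne : (Metric.sphere (0 : EuclideanSpace ℝ (Fin n)) 1).Nonempty := by
      refine ⟨e p, ?_⟩
      rw [mem_sphere_zero_iff_norm]
      exact norm_e_eq_one hp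
    obtain ⟨x₀, hx₀mem, hx₀min⟩ := (isCompact_sphere (0 : EuclideanSpace ℝ (Fin n)) 1).exists_isMinOn
      hne T.reApplyInnerSelf_continuous.continuousOn
    have hnx₀ : ‖x₀‖ = 1 := by rwa [mem_sphere_zero_iff_norm] at hx₀mem
    have hx₀ne : x₀ ≠ 0 := by
      intro h; rw [h, norm_zero] at hnx₀; norm_num at hnx₀
    have hextr : IsMinOn T.reApplyInnerSelf (Metric.sphere (0 : EuclideanSpace ℝ (Fin n)) ‖x₀‖) x₀ := by
      rwa [hnx₀]
    have heig : T x₀ = (T.rayleighQuotient x₀ : ℝ) • x₀ :=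
      hT.eq_smul_self_of_isLocalExtrOn (Or.inl hextr.localize)
    set c₀ : ℝ := T.rayleighQuotient x₀ with hc₀_def
    set w : Fin n → ℝ := WithLp.equiv 2 (Fin n → ℝ) x₀ with hw_def
    have hx₀w : x₀ = e w := by simp [he_def, hw_def]
    have hwne : w ≠ 0 := by
      intro h
      apply hx₀ne
      rw [hx₀w, h]
      simp [he_def]
    have hewc : μ *ᵥ w = c₀ • w := by
      have := congrArg (WithLp.equiv 2 (Fin n → ℝ)) heig
      simpa [he_def, hw_def, hT_def, Matrix.toLin'_apply] using this
    have h1 : lam ≤ c₀ := hmineig c₀ w hwne hewc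
    have h2 : c₀ = T.reApplyInnerSelf x₀ := by
      rw [hc₀_def, ContinuousLinearMap.rayleighQuotient, hnx₀]; norm_num
    have h3 : T.reApplyInnerSelf x₀ ≤ T.reApplyInnerSelf (e p) :=
      hx₀min (by rw [mem_sphere_zero_iff_norm]; exact norm_e_eq_one hp)
    rw [he_def, hT_def, reApply_eq] at h3
    linarith

end Rayleigh

section Trace

variable {n : ℕ}

private lemma trace_vmv (a b c d : Fin n → ℝ) :
    Matrix.trace (vecMulVec a b * vecMulVec c d) = (b ⬝ᵥ c) * (d ⬝ᵥ a) := by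
  simp only [Matrix.trace, Matrix.diag_apply, Matrix.mul_apply, Matrix.vecMulVec_apply,
    dotProduct, Finset.sum_mul_sum]
  rw [Finset.sum_comm]
  congr 1
  funext i
  congr 1
  funext k
  ring

private lemma integrand_eq (p : Fin n → ℝ) (hp : p ⬝ᵥ p = 1)
    (x : Fin n → ℝ) (hx : x ⬝ᵥ x = 1) :
    Matrix.trace ((vecMulVec p p - vecMulVec x x) * (vecMulVec p p - vecMulVec x x)) =
      2 - 2 * (p ⬝ᵥ x) ^ 2 := by
  rw [Matrix.sub_mul, Matrix.mul_sub, Matrix.mul_sub, Matrix.trace_sub, Matrix.trace_sub,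
    Matrix.trace_sub, trace_vmv, trace_vmv, trace_vmv, trace_vmv, hp, hx]
  rw [dotProduct_comm x p]
  ring

end Trace

section IntegralPart

variable {n : ℕ}

private lemma abs_coord_le (x : {x : Fin n → ℝ // x ⬝ᵥ x = 1}) (i : Fin n) :
    |x.1 i| ≤ 1 := by
  have h1 : x.1 i * x.1 i ≤ 1 := by
    conv_rhs => rw [← x.2]
    exact Finset.single_le_sum (fun k _ => mul_self_nonneg (x.1 k)) (Finset.mem_univ i)
  nlinarith [abs_nonneg (x.1 i), abs_mul_abs_self (x.1 i)]

private lemma coord_integrable (Q : Measure {x : Fin n → ℝ // x ⬝ᵥ x = 1})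
    [IsProbabilityMeasure Q] (i j : Fin n) :
    Integrable (fun x : {x : Fin n → ℝ // x ⬝ᵥ x = 1} => x.1 i * x.1 j) Q := by
  have hmeas : Measurable (fun x : {x : Fin n → ℝ // x ⬝ᵥ x = 1} => x.1 i * x.1 j) :=
    ((measurable_pi_apply i).comp measurable_subtype_coe).mul
      ((measurable_pi_apply j).comp measurable_subtype_coe)
  refine Integrable.mono' (integrable_const (1:ℝ)) hmeas.aestronglyMeasurable ?_
  filter_upwards with x
  rw [Real.norm_eq_abs, abs_mul]
  calc |x.1 i| * |x.1 j| ≤ 1 * 1 :=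
        mul_le_mul (abs_coord_le x i) (abs_coord_le x j) (abs_nonneg _) zero_le_one
    _ = 1 := mul_one 1

private lemma sq_dot_expand (p y : Fin n → ℝ) :
    (p ⬝ᵥ y) ^ 2 = ∑ i, ∑ j, (p i * p j) * (y i * y j) := by
  rw [sq, dotProduct, Finset.sum_mul_sum]
  congr 1
  funext i
  congr 1
  funext j
  ring

private lemma integral_sq_dot (Q : Measure {x : Fin n → ℝ // x ⬝ᵥ x = 1})
    [IsProbabilityMeasure Q] (μ : Matrix (Fin n) (Fin n) ℝ)
    (hμ : ∀ i j, μ i j = ∫ x, (x : {x : Fin n → ℝ // x ⬝ᵥ x = 1}).1 i * x.1 j ∂Q)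
    (p : Fin n → ℝ) :
    ∫ x, (p ⬝ᵥ (x : {x : Fin n → ℝ // x ⬝ᵥ x = 1}).1) ^ 2 ∂Q = p ⬝ᵥ (μ *ᵥ p) := by
  have h1 : ∫ x, (p ⬝ᵥ (x : {x : Fin n → ℝ // x ⬝ᵥ x = 1}).1) ^ 2 ∂Q
      = ∫ x, ∑ i, ∑ j, (p i * p j) * ((x : {x : Fin n → ℝ // x ⬝ᵥ x = 1}).1 i * x.1 j) ∂Q := by
    congr 1
    funext x
    exact sq_dot_expand p x.1
  rw [h1, integral_finset_sum _ (fun i _ => integrable_finset_sum _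
    (fun j _ => (coord_integrable Q i j).const_mul (p i * p j)))]
  have h2 : ∀ i, ∫ x, ∑ j, (p i * p j) * ((x : {x : Fin n → ℝ // x ⬝ᵥ x = 1}).1 i * x.1 j) ∂Q
      = ∑ j, p i * p j * μ i j := by
    intro i
    rw [integral_finset_sum _ (fun j _ => (coord_integrable Q i j).const_mul (p i * p j))]
    congr 1
    funext j
    rw [integral_const_mul, hμ i j]
  simp only [h2]
  simp only [dotProduct, Matrix.mulVec, dotProduct, Finset.mul_sum]
  congr 1
  funext i
  congr 1
  funext j
  ring

private lemma frechet_eq (Q : Measure {x : Fin n → ℝ // x ⬝ᵥ x = 1})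
    [IsProbabilityMeasure Q] (μ : Matrix (Fin n) (Fin n) ℝ)
    (hμ : ∀ i j, μ i j = ∫ x, (x : {x : Fin n → ℝ // x ⬝ᵥ x = 1}).1 i * x.1 j ∂Q)
    (p : Fin n → ℝ) (hp : p ⬝ᵥ p = 1) :
    (∫ x, Matrix.trace ((vecMulVec p p - vecMulVec (x : {x : Fin n → ℝ // x ⬝ᵥ x = 1}).1 x.1) *
        (vecMulVec p p - vecMulVec x.1 x.1)) ∂Q) = 2 - 2 * (p ⬝ᵥ (μ *ᵥ p)) := by
  have h1 : (∫ x, Matrix.trace ((vecMulVec p p - vecMulVec (x : {x : Fin n → ℝ // x ⬝ᵥ x = 1}).1 x.1) *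
        (vecMulVec p p - vecMulVec x.1 x.1)) ∂Q)
      = ∫ x, (2 - 2 * (p ⬝ᵥ (x : {x : Fin n → ℝ // x ⬝ᵥ x = 1}).1) ^ 2) ∂Q := by
    congr 1
    funext x
    exact integrand_eq p hp x.1 x.2
  have hint : Integrable (fun x : {x : Fin n → ℝ // x ⬝ᵥ x = 1} => (p ⬝ᵥ x.1) ^ 2) Q := by
    have : (fun x : {x : Fin n → ℝ // x ⬝ᵥ x = 1} => (p ⬝ᵥ x.1) ^ 2)
        = fun x => ∑ i, ∑ j, (p i * p j) * (x.1 i * x.1 j) := by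
      funext x; exact sq_dot_expand p x.1
    rw [this]
    exact integrable_finset_sum _ (fun i _ => integrable_finset_sum _
      (fun j _ => (coord_integrable Q i j).const_mul (p i * p j)))
  rw [h1, integral_sub (integrable_const 2) (hint.const_mul 2), integral_const_mul,
    integral_sq_dot Q μ hμ p, integral_const]
  simp

end IntegralPart

/-- Let `Q` be a probability measure on the unit sphere `S^m ⊂ ℝ^{m+1}`
with second moment matrix `μ = ∫ x xᵀ dQ`. A unit vector `v` maximizes the Fréchet
function `F(p) = ∫ ‖p pᵀ - x xᵀ‖₀² dQ(x)` over unit vectors iff `v` is an eigenvector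
of `μ` for its smallest eigenvalue; i.e. the VW antimean set of `Q` on `ℝP^m` is the set
of `[v]` with `v` a unit vector in the bottom eigenspace of `μ`. -/
theorem vw_antimean_set (m : ℕ)
    (Q : Measure {x : Fin (m + 1) → ℝ // x ⬝ᵥ x = 1}) [IsProbabilityMeasure Q]
    (μ : Matrix (Fin (m + 1)) (Fin (m + 1)) ℝ)
    (hμ : ∀ i j, μ i j = ∫ x, (x : {x : Fin (m + 1) → ℝ // x ⬝ᵥ x = 1}).1 i * x.1 j ∂Q)
    (v : Fin (m + 1) → ℝ) (hv : v ⬝ᵥ v = 1) :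
    (∀ p : Fin (m + 1) → ℝ, p ⬝ᵥ p = 1 →
        (∫ x, Matrix.trace ((vecMulVec p p - vecMulVec x.1 x.1) *
            (vecMulVec p p - vecMulVec x.1 x.1)) ∂Q)
          ≤ ∫ x, Matrix.trace ((vecMulVec v v - vecMulVec x.1 x.1) *
            (vecMulVec v v - vecMulVec x.1 x.1)) ∂Q) ↔
    (∃ lam : ℝ, μ *ᵥ v = lam • v ∧
      ∀ (c : ℝ) (w : Fin (m + 1) → ℝ), w ≠ 0 → μ *ᵥ w = c • w → lam ≤ c) := by
  have hsym : ∀ i j, μ i j = μ j i := by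
    intro i j
    rw [hμ i j, hμ j i]
    congr 1
    funext x
    ring
  have step : (∀ p : Fin (m + 1) → ℝ, p ⬝ᵥ p = 1 →
        (∫ x, Matrix.trace ((vecMulVec p p - vecMulVec x.1 x.1) *
            (vecMulVec p p - vecMulVec x.1 x.1)) ∂Q)
          ≤ ∫ x, Matrix.trace ((vecMulVec v v - vecMulVec x.1 x.1) *
            (vecMulVec v v - vecMulVec x.1 x.1)) ∂Q) ↔
      (∀ p : Fin (m + 1) → ℝ, p ⬝ᵥ p = 1 → v ⬝ᵥ (μ *ᵥ v) ≤ p ⬝ᵥ (μ *ᵥ p)) := by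
    constructor <;> intro h p hp <;> have h' := h p hp
    · rw [frechet_eq Q μ hμ p hp, frechet_eq Q μ hμ v hv] at h'
      linarith
    · rw [frechet_eq Q μ hμ p hp, frechet_eq Q μ hμ v hv]
      linarith
  exact step.trans (rayleigh_min_iff μ hsym v hv)
end

section
/- Let Q be a probability measure on the unit sphere S^m ⊂ ℝ^{m+1} whose second moment matrix μ = ∫ x xᵀ Q(dx) has a simple smallest eigenvalue λ(1) with unit eigenvector γ(1). Then the set of unit vectors maximizing the Fréchet function F(p) = ∫ ‖p pᵀ − x xᵀ‖₀² Q(dx) is exactly {γ(1), −γ(1)}; that is, Q is α-VW-nonfocal and its VW antimean is the unique point αμ_{j,E}(Q) = [γ(1)] ∈ ℝP^m, which equals j⁻¹(P_{F,j}(μ)). -/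
open Matrix MeasureTheory

lemma vw_trace_vmv_mul_vmv {n : ℕ} (a b c d : Fin n → ℝ) :
    Matrix.trace (vecMulVec a b * vecMulVec c d) = (b ⬝ᵥ c) * (d ⬝ᵥ a) := by
  simp only [Matrix.trace, Matrix.diag, Matrix.mul_apply, Matrix.vecMulVec_apply, dotProduct]
  conv_rhs => rw [Finset.sum_mul_sum, Finset.sum_comm]
  exact Finset.sum_congr rfl fun i _ => Finset.sum_congr rfl fun j _ => by ring

lemma vw_trace_vmv_mul {n : ℕ} (y : Fin n → ℝ) (μ : Matrix (Fin n) (Fin n) ℝ) :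
    Matrix.trace (vecMulVec y y * μ) = y ⬝ᵥ (μ *ᵥ y) := by
  simp only [Matrix.trace, Matrix.diag, Matrix.mul_apply, Matrix.vecMulVec_apply,
    dotProduct, Matrix.mulVec, Finset.mul_sum]
  rw [Finset.sum_comm]
  exact Finset.sum_congr rfl fun i _ => Finset.sum_congr rfl fun j _ => by ring

lemma vw_trace_mul_vmv {n : ℕ} (y : Fin n → ℝ) (μ : Matrix (Fin n) (Fin n) ℝ) :
    Matrix.trace (μ * vecMulVec y y) = y ⬝ᵥ (μ *ᵥ y) := by
  rw [Matrix.trace_mul_comm, vw_trace_vmv_mul]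

lemma vw_trace_sub_vmv {n : ℕ} (p x : Fin n → ℝ) :
    Matrix.trace ((vecMulVec p p - vecMulVec x x) * (vecMulVec p p - vecMulVec x x))
      = (p ⬝ᵥ p) * (p ⬝ᵥ p) - 2 * ((p ⬝ᵥ x) * (p ⬝ᵥ x)) + (x ⬝ᵥ x) * (x ⬝ᵥ x) := by
  rw [sub_mul, mul_sub, mul_sub, Matrix.trace_sub, Matrix.trace_sub, Matrix.trace_sub,
    vw_trace_vmv_mul_vmv, vw_trace_vmv_mul_vmv, vw_trace_vmv_mul_vmv, vw_trace_vmv_mul_vmv,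
    dotProduct_comm x p]
  ring

lemma vw_trace_sub_mat {n : ℕ} (y : Fin n → ℝ) (μ : Matrix (Fin n) (Fin n) ℝ) :
    Matrix.trace ((vecMulVec y y - μ) * (vecMulVec y y - μ))
      = (y ⬝ᵥ y) * (y ⬝ᵥ y) - 2 * (y ⬝ᵥ (μ *ᵥ y)) + Matrix.trace (μ * μ) := by
  rw [sub_mul, mul_sub, mul_sub, Matrix.trace_sub, Matrix.trace_sub, Matrix.trace_sub,
    vw_trace_vmv_mul_vmv, vw_trace_vmv_mul, vw_trace_mul_vmv]
  ring

lemma vw_spectral {n : ℕ} (μ : Matrix (Fin n) (Fin n) ℝ) (hsym : μ.IsHermitian)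
    (lam : ℝ) (γ : Fin n → ℝ) (hγ : γ ⬝ᵥ γ = 1)
    (hmin : ∀ (c : ℝ) (w : Fin n → ℝ), w ≠ 0 → μ *ᵥ w = c • w → lam ≤ c)
    (hsimple : ∀ w : Fin n → ℝ, μ *ᵥ w = lam • w → ∃ c : ℝ, w = c • γ) :
    (∀ w : Fin n → ℝ, w ⬝ᵥ w = 1 → lam ≤ w ⬝ᵥ (μ *ᵥ w)) ∧
    (∀ w : Fin n → ℝ, w ⬝ᵥ w = 1 → w ⬝ᵥ (μ *ᵥ w) = lam → w = γ ∨ w = -γ) := by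
  set A : Matrix (Fin n) (Fin n) ℝ := μ - lam • (1 : Matrix (Fin n) (Fin n) ℝ) with hAdef
  have hA : A.IsHermitian := by
    refine hsym.sub ?_
    simp [Matrix.IsHermitian]
  have hAv : ∀ w : Fin n → ℝ, A *ᵥ w = μ *ᵥ w - lam • w := by
    intro w
    rw [hAdef, Matrix.sub_mulVec, Matrix.smul_mulVec, Matrix.one_mulVec]
  have hPSD : A.PosSemidef := by
    refine hA.posSemidef_iff_eigenvalues_nonneg.mpr fun i => show (0:ℝ) ≤ hA.eigenvalues i from ?_
    have hv := hA.mulVec_eigenvectorBasis i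
    have hvne : ⇑(hA.eigenvectorBasis i) ≠ 0 := by
      have h0 : hA.eigenvectorBasis i ≠ 0 := hA.eigenvectorBasis.orthonormal.ne_zero i
      intro hc
      exact h0 (by ext j; exact congrFun hc j)
    have hμv : μ *ᵥ ⇑(hA.eigenvectorBasis i)
        = (hA.eigenvalues i + lam) • ⇑(hA.eigenvectorBasis i) := by
      have := hAv ⇑(hA.eigenvectorBasis i)
      rw [hv] at this
      have h2 : μ *ᵥ ⇑(hA.eigenvectorBasis i)
          = hA.eigenvalues i • ⇑(hA.eigenvectorBasis i) + lam • ⇑(hA.eigenvectorBasis i) := by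
        rw [this]; abel
      rw [h2, ← add_smul]
    have := hmin (hA.eigenvalues i + lam) _ hvne hμv
    linarith
  have hdot : ∀ w : Fin n → ℝ, w ⬝ᵥ (A *ᵥ w) = w ⬝ᵥ (μ *ᵥ w) - lam * (w ⬝ᵥ w) := by
    intro w
    rw [hAv, dotProduct_sub, dotProduct_smul, smul_eq_mul]
  constructor
  · intro w hw
    have h0 : (0:ℝ) ≤ star w ⬝ᵥ (A *ᵥ w) := hPSD.dotProduct_mulVec_nonneg w
    rw [star_trivial] at h0
    rw [hdot w, hw, mul_one] at h0
    linarith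
  · intro w hw hweq
    have h0 : star w ⬝ᵥ (A *ᵥ w) = 0 := by
      rw [star_trivial, hdot w, hw, mul_one, hweq, sub_self]
    have hA0 : A *ᵥ w = 0 := (hPSD.dotProduct_mulVec_zero_iff w).mp h0
    have hμw : μ *ᵥ w = lam • w := by
      have := hAv w; rw [hA0] at this
      exact sub_eq_zero.mp this.symm
    obtain ⟨c, rfl⟩ := hsimple w hμw
    have hc : c * c = 1 := by
      have : (c • γ) ⬝ᵥ (c • γ) = c * c * (γ ⬝ᵥ γ) := by
        rw [smul_dotProduct, dotProduct_smul, smul_eq_mul, smul_eq_mul]; ring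
      rw [hw, hγ, mul_one] at this
      linarith
    rcases mul_self_eq_one_iff.mp hc with h | h
    · left; rw [h, one_smul]
    · right; rw [h, neg_one_smul]

lemma vw_integral_dot_sq {m : ℕ}
    (Q : Measure {x : Fin (m + 1) → ℝ // x ⬝ᵥ x = 1}) [IsProbabilityMeasure Q]
    (μ : Matrix (Fin (m + 1)) (Fin (m + 1)) ℝ)
    (hμ : ∀ i j, μ i j = ∫ x, (x : {x : Fin (m + 1) → ℝ // x ⬝ᵥ x = 1}).1 i * x.1 j ∂Q)
    (p : Fin (m + 1) → ℝ) :
    Integrable (fun x : {x : Fin (m + 1) → ℝ // x ⬝ᵥ x = 1} =>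
        (p ⬝ᵥ x.1) * (p ⬝ᵥ x.1)) Q ∧
      ∫ x, (p ⬝ᵥ (x : {x : Fin (m + 1) → ℝ // x ⬝ᵥ x = 1}).1) * (p ⬝ᵥ x.1) ∂Q
        = p ⬝ᵥ (μ *ᵥ p) := by
  set S := {x : Fin (m + 1) → ℝ // x ⬝ᵥ x = 1}
  have habs : ∀ (x : S) (i : Fin (m + 1)), |x.1 i| ≤ 1 := by
    intro x i
    rw [abs_le_one_iff_mul_self_le_one]
    have h := Finset.single_le_sum (f := fun k => x.1 k * x.1 k)
      (fun k _ => mul_self_nonneg _) (Finset.mem_univ i)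
    calc x.1 i * x.1 i ≤ ∑ k, x.1 k * x.1 k := h
      _ = 1 := x.2
  have hint : ∀ i j, Integrable (fun x : S => x.1 i * x.1 j) Q := by
    intro i j
    refine Integrable.mono' (integrable_const (1 : ℝ)) ?_ ?_
    · exact (((measurable_pi_apply i).comp measurable_subtype_coe).mul
        ((measurable_pi_apply j).comp measurable_subtype_coe)).aestronglyMeasurable
    · filter_upwards with x
      rw [Real.norm_eq_abs, abs_mul]
      exact mul_le_one₀ (habs x i) (abs_nonneg _) (habs x j)
  have hrep : (fun x : S => (p ⬝ᵥ x.1) * (p ⬝ᵥ x.1))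
      = fun x : S => ∑ i, ∑ j, (p i * p j) * (x.1 i * x.1 j) := by
    funext x
    simp only [dotProduct]
    rw [Finset.sum_mul_sum]
    exact Finset.sum_congr rfl fun i _ => Finset.sum_congr rfl fun j _ => by ring
  constructor
  · rw [hrep]
    exact integrable_finset_sum _ fun i _ =>
      integrable_finset_sum _ fun j _ => (hint i j).const_mul _
  · rw [hrep, integral_finset_sum _ fun i _ =>
      integrable_finset_sum _ fun j _ => (hint i j).const_mul _]
    have : ∀ i, ∫ x : S, ∑ j, (p i * p j) * (x.1 i * x.1 j) ∂Q
        = ∑ j, (p i * p j) * μ i j := by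
      intro i
      rw [integral_finset_sum _ fun j _ => (hint i j).const_mul _]
      exact Finset.sum_congr rfl fun j _ => by rw [integral_const_mul, ← hμ]
    rw [Finset.sum_congr rfl fun i _ => this i]
    have h2 : p ⬝ᵥ (μ *ᵥ p) = ∑ i, ∑ j, (p i * p j) * μ i j := by
      simp only [dotProduct, Matrix.mulVec, Finset.mul_sum]
      exact Finset.sum_congr rfl fun i _ => Finset.sum_congr rfl fun j _ => by ring
    rw [h2]

/-- Let `Q` be a probability measure on the unit sphere `S^m ⊂ ℝ^{m+1}`
whose second moment matrix `μ = ∫ x xᵀ dQ` has a simple smallest eigenvalue `λ(1)`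
with unit eigenvector `γ(1)`. Then the set of unit vectors maximizing the Fréchet
function `F(p) = ∫ ‖p pᵀ - x xᵀ‖₀² dQ` is exactly `{γ(1), -γ(1)}`; i.e. `Q` is
α-VW-nonfocal with unique VW antimean `αμ_{j,E}(Q) = [γ(1)] = j⁻¹(P_{F,j}(μ))`,
the unique farthest point of `j(ℝP^m)` from `μ` being `γ(1) γ(1)ᵀ`. -/
theorem vw_antimean_unique (m : ℕ)
    (Q : Measure {x : Fin (m + 1) → ℝ // x ⬝ᵥ x = 1}) [IsProbabilityMeasure Q]
    (μ : Matrix (Fin (m + 1)) (Fin (m + 1)) ℝ)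
    (hμ : ∀ i j, μ i j = ∫ x, (x : {x : Fin (m + 1) → ℝ // x ⬝ᵥ x = 1}).1 i * x.1 j ∂Q)
    (lam : ℝ) (γ : Fin (m + 1) → ℝ) (hγ : γ ⬝ᵥ γ = 1) (heig : μ *ᵥ γ = lam • γ)
    (hmin : ∀ (c : ℝ) (w : Fin (m + 1) → ℝ), w ≠ 0 → μ *ᵥ w = c • w → lam ≤ c)
    (hsimple : ∀ w : Fin (m + 1) → ℝ, μ *ᵥ w = lam • w → ∃ c : ℝ, w = c • γ) :
    {p : Fin (m + 1) → ℝ | p ⬝ᵥ p = 1 ∧ ∀ r : Fin (m + 1) → ℝ, r ⬝ᵥ r = 1 →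
        (∫ x, Matrix.trace ((vecMulVec r r - vecMulVec x.1 x.1) *
            (vecMulVec r r - vecMulVec x.1 x.1)) ∂Q)
          ≤ ∫ x, Matrix.trace ((vecMulVec p p - vecMulVec x.1 x.1) *
            (vecMulVec p p - vecMulVec x.1 x.1)) ∂Q} = {γ, -γ} ∧
    {B : Matrix (Fin (m + 1)) (Fin (m + 1)) ℝ | ∃ x : Fin (m + 1) → ℝ, x ⬝ᵥ x = 1 ∧
        B = vecMulVec x x ∧ ∀ y : Fin (m + 1) → ℝ, y ⬝ᵥ y = 1 →
          Matrix.trace ((vecMulVec y y - μ) * (vecMulVec y y - μ))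
            ≤ Matrix.trace ((vecMulVec x x - μ) * (vecMulVec x x - μ))}
      = {vecMulVec γ γ} := by
  have hsym : μ.IsHermitian := by
    ext i j
    rw [Matrix.conjTranspose_apply, star_trivial, hμ i j, hμ j i]
    simp_rw [mul_comm]
  obtain ⟨hlow, hequ⟩ := vw_spectral μ hsym lam γ hγ hmin hsimple
  have hγlam : γ ⬝ᵥ (μ *ᵥ γ) = lam := by
    rw [heig, dotProduct_smul, smul_eq_mul, hγ, mul_one]
  have hnγ : (-γ) ⬝ᵥ (-γ) = 1 := by
    rw [neg_dotProduct, dotProduct_neg, neg_neg, hγ]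
  have hnγlam : (-γ) ⬝ᵥ (μ *ᵥ (-γ)) = lam := by
    rw [Matrix.mulVec_neg, neg_dotProduct, dotProduct_neg, neg_neg, hγlam]
  have hF : ∀ p : Fin (m + 1) → ℝ,
      (∫ x, Matrix.trace ((vecMulVec p p - vecMulVec
          (x : {x : Fin (m + 1) → ℝ // x ⬝ᵥ x = 1}).1 x.1) *
          (vecMulVec p p - vecMulVec x.1 x.1)) ∂Q)
        = (p ⬝ᵥ p) * (p ⬝ᵥ p) + 1 - 2 * (p ⬝ᵥ (μ *ᵥ p)) := by
    intro p
    obtain ⟨hi, hv⟩ := vw_integral_dot_sq Q μ hμ p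
    have hfun : (fun x : {x : Fin (m + 1) → ℝ // x ⬝ᵥ x = 1} =>
        Matrix.trace ((vecMulVec p p - vecMulVec x.1 x.1) *
          (vecMulVec p p - vecMulVec x.1 x.1)))
        = fun x => ((p ⬝ᵥ p) * (p ⬝ᵥ p) + 1) - 2 * ((p ⬝ᵥ x.1) * (p ⬝ᵥ x.1)) := by
      funext x
      rw [vw_trace_sub_vmv, x.2]
      ring
    rw [hfun, integral_sub (integrable_const _) (hi.const_mul 2), integral_const,
      integral_const_mul, hv]
    simp [measure_univ]
  constructor
  · ext p
    simp only [Set.mem_setOf_eq, Set.mem_insert_iff, Set.mem_singleton_iff]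
    constructor
    · rintro ⟨hp, hmax⟩
      have h1 := hmax γ hγ
      rw [hF, hF, hγ, hp, hγlam] at h1
      exact hequ p hp (le_antisymm (by linarith) (hlow p hp))
    · rintro (rfl | rfl)
      · refine ⟨hγ, fun r hr => ?_⟩
        rw [hF, hF, hγ, hr, hγlam]
        have := hlow r hr
        linarith
      · refine ⟨hnγ, fun r hr => ?_⟩
        rw [hF, hF, hnγ, hr, hnγlam]
        have := hlow r hr
        linarith
  · ext B
    simp only [Set.mem_setOf_eq, Set.mem_singleton_iff]
    constructor
    · rintro ⟨x, hx, rfl, hmax⟩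
      have h1 := hmax γ hγ
      rw [vw_trace_sub_mat, vw_trace_sub_mat, hγ, hx, hγlam] at h1
      have hxl : x ⬝ᵥ (μ *ᵥ x) = lam := le_antisymm (by linarith) (hlow x hx)
      rcases hequ x hx hxl with rfl | rfl
      · rfl
      · ext i j
        simp only [Matrix.vecMulVec_apply, Pi.neg_apply]
        ring
    · rintro rfl
      refine ⟨γ, hγ, rfl, fun y hy => ?_⟩
      rw [vw_trace_sub_mat, vw_trace_sub_mat, hγ, hy, hγlam]
      have := hlow y hy
      linarith
end

section
/- Let x₁, …, x_n be unit vectors in ℝ^{m+1} and let J = n⁻¹ Σ_{i=1}^n x_i x_iᵀ. Then a unit vector g maximizes the empirical Fréchet function F_n(p) = n⁻¹ Σ_{i=1}^n ‖p pᵀ − x_i x_iᵀ‖₀² over unit vectors p if and only if g is an eigenvector of J for its smallest eigenvalue d(1). If moreover d(1) is simple with unit eigenvector g(1), the maximizer set is exactly {g(1), −g(1)}, i.e., the VW sample antimean is a·x̄_{j,E} = [g(1)] ∈ ℝP^m. -/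
open Matrix

lemma vw_mulVec_vv {N : ℕ} (p a : Fin N → ℝ) :
    vecMulVec a a *ᵥ p = fun i => a i * (a ⬝ᵥ p) := by
  funext i
  simp only [mulVec, vecMulVec_apply, dotProduct, Finset.mul_sum]
  congr 1; ext j; ring

lemma vw_dot_mulVec_vv {N : ℕ} (p a : Fin N → ℝ) :
    p ⬝ᵥ (vecMulVec a a *ᵥ p) = (a ⬝ᵥ p) * (a ⬝ᵥ p) := by
  rw [vw_mulVec_vv]
  simp only [dotProduct]
  rw [Finset.sum_mul]
  congr 1; ext i; ring

lemma vw_trace_vv {N : ℕ} (a b c d : Fin N → ℝ) :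
    Matrix.trace (vecMulVec a b * vecMulVec c d) = (b ⬝ᵥ c) * (d ⬝ᵥ a) := by
  calc Matrix.trace (vecMulVec a b * vecMulVec c d)
      = ∑ i, ∑ j, a i * b j * (c j * d i) := by
        simp [Matrix.trace, Matrix.diag, mul_apply, vecMulVec_apply]
    _ = ∑ i, (d i * a i) * ∑ j, b j * c j := by
        congr 1; ext i; rw [Finset.mul_sum]; congr 1; ext j; ring
    _ = (b ⬝ᵥ c) * (d ⬝ᵥ a) := by
        rw [← Finset.sum_mul, mul_comm]; rfl

lemma vw_dotProduct_sum {N K : ℕ} (w : Fin N → ℝ) (f : Fin K → Fin N → ℝ) :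
    w ⬝ᵥ (∑ k, f k) = ∑ k, w ⬝ᵥ f k := by
  simp only [dotProduct, Finset.sum_apply, Finset.mul_sum]
  exact Finset.sum_comm

lemma vw_sum_mulVec {N n : ℕ} (M : Fin n → Matrix (Fin N) (Fin N) ℝ) (p : Fin N → ℝ) :
    (∑ i, M i) *ᵥ p = ∑ i, M i *ᵥ p := by
  funext j
  simp only [mulVec, dotProduct, Finset.sum_apply, Matrix.sum_apply, Finset.sum_mul]
  exact Finset.sum_comm

lemma vw_mulVec_sum {N k : ℕ} (J : Matrix (Fin N) (Fin N) ℝ) (f : Fin k → Fin N → ℝ) :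
    J *ᵥ (∑ i, f i) = ∑ i, J *ᵥ f i := by
  funext j
  simp only [mulVec, dotProduct, Finset.sum_apply, Finset.mul_sum]
  exact Finset.sum_comm

lemma vw_eigenbasis {N : ℕ} (J : Matrix (Fin N) (Fin N) ℝ) (hJ : J.IsHermitian) :
    ∃ (μ : Fin N → ℝ) (v : Fin N → Fin N → ℝ),
      (∀ k, J *ᵥ v k = μ k • v k) ∧
      (∀ k l, v k ⬝ᵥ v l = if k = l then 1 else 0) ∧
      (∀ w : Fin N → ℝ, w = ∑ k, (v k ⬝ᵥ w) • v k) := by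
  refine ⟨hJ.eigenvalues, fun k => ⇑(hJ.eigenvectorBasis k), hJ.mulVec_eigenvectorBasis, ?_, ?_⟩
  · intro k l
    have := orthonormal_iff_ite.mp hJ.eigenvectorBasis.orthonormal k l
    simpa [PiLp.inner_apply, RCLike.inner_apply, dotProduct, mul_comm] using this
  · intro w
    set w' : EuclideanSpace ℝ (Fin N) := (WithLp.equiv 2 _).symm w with hw'
    have hrep := hJ.eigenvectorBasis.sum_repr' w'
    have h2 : ∀ k, (inner ℝ (hJ.eigenvectorBasis k) w' : ℝ)
        = (⇑(hJ.eigenvectorBasis k) : Fin N → ℝ) ⬝ᵥ w := by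
      intro k
      simp [PiLp.inner_apply, RCLike.inner_apply, dotProduct, hw', WithLp.equiv_symm_apply, mul_comm]
    funext i
    have h3 := congrFun (congrArg (WithLp.equiv 2 (Fin N → ℝ)) hrep) i
    simp only [h2] at h3
    rw [show w i = (WithLp.equiv 2 (Fin N → ℝ)) w' i from rfl, ← h3]
    rw [show ((WithLp.equiv 2 (Fin N → ℝ))
      (∑ x : Fin N, ((⇑(hJ.eigenvectorBasis x) : Fin N → ℝ) ⬝ᵥ w) • hJ.eigenvectorBasis x)) i
      = (∑ x : Fin N, ((⇑(hJ.eigenvectorBasis x) : Fin N → ℝ) ⬝ᵥ w) •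
          (⇑(hJ.eigenvectorBasis x) : Fin N → ℝ)) i from by simp [Finset.sum_apply]]

/-- Let `x₁, …, xₙ` be unit vectors in `ℝ^{m+1}` and
`J = n⁻¹ Σᵢ xᵢ xᵢᵀ`. A unit vector `g` maximizes the empirical Fréchet function
`Fₙ(p) = n⁻¹ Σᵢ ‖p pᵀ - xᵢ xᵢᵀ‖₀²` over unit vectors iff `g` is an eigenvector of `J`
for its smallest eigenvalue `d(1)`; if moreover `d(1)` is simple with unit eigenvector
`g(1)`, the maximizer set is exactly `{g(1), -g(1)}` (the VW sample antimean is
`[g(1)]`). -/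
theorem vw_sample_antimean (m n : ℕ) (hn : 0 < n)
    (x : Fin n → Fin (m + 1) → ℝ) (hx : ∀ i, x i ⬝ᵥ x i = 1)
    (J : Matrix (Fin (m + 1)) (Fin (m + 1)) ℝ)
    (hJ : J = (n : ℝ)⁻¹ • ∑ i, vecMulVec (x i) (x i)) :
    (∀ g : Fin (m + 1) → ℝ, g ⬝ᵥ g = 1 →
      ((∀ p : Fin (m + 1) → ℝ, p ⬝ᵥ p = 1 →
          (n : ℝ)⁻¹ * ∑ i, Matrix.trace ((vecMulVec p p - vecMulVec (x i) (x i)) *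
              (vecMulVec p p - vecMulVec (x i) (x i)))
            ≤ (n : ℝ)⁻¹ * ∑ i, Matrix.trace ((vecMulVec g g - vecMulVec (x i) (x i)) *
              (vecMulVec g g - vecMulVec (x i) (x i)))) ↔
        (∃ d : ℝ, J *ᵥ g = d • g ∧
          ∀ (c : ℝ) (w : Fin (m + 1) → ℝ), w ≠ 0 → J *ᵥ w = c • w → d ≤ c))) ∧
    (∀ (d : ℝ) (g1 : Fin (m + 1) → ℝ), g1 ⬝ᵥ g1 = 1 → J *ᵥ g1 = d • g1 →
      (∀ (c : ℝ) (w : Fin (m + 1) → ℝ), w ≠ 0 → J *ᵥ w = c • w → d ≤ c) →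
      (∀ w : Fin (m + 1) → ℝ, J *ᵥ w = d • w → ∃ c : ℝ, w = c • g1) →
      {p : Fin (m + 1) → ℝ | p ⬝ᵥ p = 1 ∧ ∀ r : Fin (m + 1) → ℝ, r ⬝ᵥ r = 1 →
          (n : ℝ)⁻¹ * ∑ i, Matrix.trace ((vecMulVec r r - vecMulVec (x i) (x i)) *
              (vecMulVec r r - vecMulVec (x i) (x i)))
            ≤ (n : ℝ)⁻¹ * ∑ i, Matrix.trace ((vecMulVec p p - vecMulVec (x i) (x i)) *
              (vecMulVec p p - vecMulVec (x i) (x i)))} = {g1, -g1}) := by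
  have hn0 : (n : ℝ) ≠ 0 := Nat.cast_ne_zero.mpr hn.ne'
  set Q : (Fin (m + 1) → ℝ) → ℝ := fun p => p ⬝ᵥ (J *ᵥ p) with hQdef
  -- the Fréchet function in terms of the quadratic form Q
  have key : ∀ p : Fin (m + 1) → ℝ, p ⬝ᵥ p = 1 →
      (n : ℝ)⁻¹ * ∑ i, Matrix.trace ((vecMulVec p p - vecMulVec (x i) (x i)) *
          (vecMulVec p p - vecMulVec (x i) (x i))) = 2 - 2 * Q p := by
    intro p hp
    have hterm : ∀ i, Matrix.trace ((vecMulVec p p - vecMulVec (x i) (x i)) *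
        (vecMulVec p p - vecMulVec (x i) (x i)))
        = 2 - 2 * ((x i ⬝ᵥ p) * (x i ⬝ᵥ p)) := by
      intro i
      simp only [sub_mul, mul_sub, Matrix.trace_sub, vw_trace_vv, hx i, hp]
      rw [dotProduct_comm p (x i)]
      ring
    have hQp : Q p = (n : ℝ)⁻¹ * ∑ i, (x i ⬝ᵥ p) * (x i ⬝ᵥ p) := by
      rw [hQdef]
      dsimp only
      rw [hJ, smul_mulVec, dotProduct_smul, smul_eq_mul, vw_sum_mulVec,
        vw_dotProduct_sum]
      congr 1
      exact Finset.sum_congr rfl fun i _ => vw_dot_mulVec_vv p (x i)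
    rw [hQp]
    rw [Finset.sum_congr rfl fun i _ => hterm i]
    rw [Finset.sum_sub_distrib, Finset.sum_const, Finset.card_univ, Fintype.card_fin,
      ← Finset.mul_sum]
    field_simp
    ring
  have hJsym : J.IsHermitian := by
    rw [hJ]
    show _ᴴ = _
    ext i j
    simp only [conjTranspose_apply, Matrix.smul_apply, Matrix.sum_apply, vecMulVec_apply,
      star_trivial, smul_eq_mul]
    congr 1
    exact Finset.sum_congr rfl fun k _ => mul_comm _ _
  obtain ⟨μ, v, hvE, hvO, hvC⟩ := vw_eigenbasis J hJsym
  have hvunit : ∀ k, v k ⬝ᵥ v k = 1 := fun k => by simpa using hvO k k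
  have hvne : ∀ k, v k ≠ 0 := by
    intro k hk
    have := hvunit k
    rw [hk] at this
    simp [dotProduct] at this
  have hQv : ∀ k, Q (v k) = μ k := by
    intro k
    rw [hQdef]; dsimp only
    rw [hvE k, dotProduct_smul, hvunit k, smul_eq_mul, mul_one]
  have hcoord : ∀ (w : Fin (m + 1) → ℝ) (a : Fin (m + 1) → ℝ),
      w ⬝ᵥ (∑ k, a k • v k) = ∑ k, a k * (v k ⬝ᵥ w) := by
    intro w a
    rw [vw_dotProduct_sum]
    exact Finset.sum_congr rfl fun k _ => by
      rw [dotProduct_smul, smul_eq_mul, dotProduct_comm]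
  have hJw : ∀ w : Fin (m + 1) → ℝ, J *ᵥ w = ∑ k, ((v k ⬝ᵥ w) * μ k) • v k := by
    intro w
    conv_lhs => rw [hvC w]
    rw [vw_mulVec_sum]
    exact Finset.sum_congr rfl fun k _ => by rw [mulVec_smul, hvE k, smul_smul]
  have hQdecomp : ∀ w : Fin (m + 1) → ℝ, Q w = ∑ k, μ k * (v k ⬝ᵥ w) ^ 2 := by
    intro w
    rw [hQdef]; dsimp only
    rw [hJw w, hcoord]
    exact Finset.sum_congr rfl fun k _ => by ring
  have hnorm : ∀ w : Fin (m + 1) → ℝ, w ⬝ᵥ w = ∑ k, (v k ⬝ᵥ w) ^ 2 := by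
    intro w
    have h1 : w ⬝ᵥ w = w ⬝ᵥ (∑ k, (v k ⬝ᵥ w) • v k) := congrArg (fun z => w ⬝ᵥ z) (hvC w)
    rw [h1, hcoord]
    exact Finset.sum_congr rfl fun k _ => by ring
  -- the spectral characterization of minimizers of Q
  have hQmin_iff : ∀ g : Fin (m + 1) → ℝ, g ⬝ᵥ g = 1 →
      ((∀ p : Fin (m + 1) → ℝ, p ⬝ᵥ p = 1 → Q g ≤ Q p) ↔
        (∃ d : ℝ, J *ᵥ g = d • g ∧
          ∀ (c : ℝ) (w : Fin (m + 1) → ℝ), w ≠ 0 → J *ᵥ w = c • w → d ≤ c)) := by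
    intro g hg
    constructor
    · intro hmin
      obtain ⟨k0, -, hk0⟩ := Finset.exists_min_image Finset.univ μ Finset.univ_nonempty
      have hk0' : ∀ k, μ k0 ≤ μ k := fun k => hk0 k (Finset.mem_univ k)
      have hsum1 : ∑ k, (v k ⬝ᵥ g) ^ 2 = 1 := by rw [← hnorm g, hg]
      have hle1 : Q g ≤ μ k0 := by
        have := hmin (v k0) (hvunit k0)
        rwa [hQv k0] at this
      have hge : μ k0 ≤ Q g := by
        rw [hQdecomp g]
        calc μ k0 = ∑ k, μ k0 * (v k ⬝ᵥ g) ^ 2 := by rw [← Finset.mul_sum, hsum1, mul_one]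
          _ ≤ ∑ k, μ k * (v k ⬝ᵥ g) ^ 2 :=
            Finset.sum_le_sum fun k _ => mul_le_mul_of_nonneg_right (hk0' k) (sq_nonneg _)
      have hQg : Q g = μ k0 := le_antisymm hle1 hge
      have hzero : ∀ k, (μ k - μ k0) * (v k ⬝ᵥ g) ^ 2 = 0 := by
        have hsz : ∑ k, (μ k - μ k0) * (v k ⬝ᵥ g) ^ 2 = 0 := by
          have he : ∑ k, (μ k - μ k0) * (v k ⬝ᵥ g) ^ 2
              = (∑ k, μ k * (v k ⬝ᵥ g) ^ 2) - μ k0 * ∑ k, (v k ⬝ᵥ g) ^ 2 := by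
            rw [Finset.mul_sum, ← Finset.sum_sub_distrib]
            exact Finset.sum_congr rfl fun k _ => by ring
          rw [he, ← hQdecomp g, hQg, hsum1, mul_one, sub_self]
        intro k
        exact (Finset.sum_eq_zero_iff_of_nonneg fun k _ =>
          mul_nonneg (sub_nonneg.mpr (hk0' k)) (sq_nonneg _)).mp hsz k (Finset.mem_univ k)
      have heig : J *ᵥ g = μ k0 • g := by
        rw [hJw g]
        conv_rhs => rw [hvC g]
        rw [Finset.smul_sum]
        refine Finset.sum_congr rfl fun k _ => ?_
        rw [smul_smul]
        congr 1
        rcases mul_eq_zero.mp (hzero k) with h | h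
        · rw [sub_eq_zero.mp h, mul_comm]
        · rw [sq_eq_zero_iff.mp h]; ring
      refine ⟨μ k0, heig, ?_⟩
      intro c w hw hEw
      have hQw : Q w = c * (w ⬝ᵥ w) := by
        rw [hQdef]; dsimp only
        rw [hEw, dotProduct_smul, smul_eq_mul]
      have hge2 : μ k0 * (w ⬝ᵥ w) ≤ Q w := by
        rw [hQdecomp w, hnorm w, Finset.mul_sum]
        exact Finset.sum_le_sum fun k _ =>
          mul_le_mul_of_nonneg_right (hk0' k) (sq_nonneg _)
      have hwpos : 0 < w ⬝ᵥ w := by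
        have h0 : 0 ≤ w ⬝ᵥ w := by rw [hnorm w]; positivity
        rcases h0.lt_or_eq with h | h
        · exact h
        · exact absurd (dotProduct_self_eq_zero.mp h.symm) hw
      nlinarith [hge2, hQw]
    · rintro ⟨d, hEg, hdmin⟩ p hp
      have hQg : Q g = d := by
        rw [hQdef]; dsimp only
        rw [hEg, dotProduct_smul, hg, smul_eq_mul, mul_one]
      have hdk : ∀ k, d ≤ μ k := fun k => hdmin (μ k) (v k) (hvne k) (hvE k)
      rw [hQg, hQdecomp p]
      calc d = ∑ k, d * (v k ⬝ᵥ p) ^ 2 := by rw [← Finset.mul_sum, ← hnorm p, hp, mul_one]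
        _ ≤ ∑ k, μ k * (v k ⬝ᵥ p) ^ 2 :=
          Finset.sum_le_sum fun k _ => mul_le_mul_of_nonneg_right (hdk k) (sq_nonneg _)
  have part1 : ∀ g : Fin (m + 1) → ℝ, g ⬝ᵥ g = 1 →
      ((∀ p : Fin (m + 1) → ℝ, p ⬝ᵥ p = 1 →
          (n : ℝ)⁻¹ * ∑ i, Matrix.trace ((vecMulVec p p - vecMulVec (x i) (x i)) *
              (vecMulVec p p - vecMulVec (x i) (x i)))
            ≤ (n : ℝ)⁻¹ * ∑ i, Matrix.trace ((vecMulVec g g - vecMulVec (x i) (x i)) *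
              (vecMulVec g g - vecMulVec (x i) (x i)))) ↔
        (∃ d : ℝ, J *ᵥ g = d • g ∧
          ∀ (c : ℝ) (w : Fin (m + 1) → ℝ), w ≠ 0 → J *ᵥ w = c • w → d ≤ c)) := by
    intro g hg
    rw [← hQmin_iff g hg]
    constructor
    · intro h p hp
      have := h p hp
      rw [key p hp, key g hg] at this
      linarith
    · intro h p hp
      rw [key p hp, key g hg]
      have := h p hp
      linarith
  refine ⟨part1, ?_⟩
  intro d g1 hg1 hEg1 hdmin hspan
  ext p
  simp only [Set.mem_setOf_eq, Set.mem_insert_iff, Set.mem_singleton_iff]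
  constructor
  · rintro ⟨hp, hmax⟩
    obtain ⟨d', hEd', hd'min⟩ := (part1 p hp).mp hmax
    have hpne : p ≠ 0 := by
      intro h
      rw [h] at hp
      simp [dotProduct] at hp
    have hg1ne : g1 ≠ 0 := by
      intro h
      rw [h] at hg1
      simp [dotProduct] at hg1
    have hdd : d' = d := le_antisymm (hd'min d g1 hg1ne hEg1) (hdmin d' p hpne hEd')
    obtain ⟨c, hc⟩ := hspan p (by rw [← hdd]; exact hEd')
    have hcc : c * c = 1 := by
      have h2 := hp
      rw [hc, smul_dotProduct, dotProduct_smul, hg1] at h2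
      simpa using h2
    rcases mul_self_eq_one_iff.mp hcc with h1 | h1
    · left; rw [hc, h1, one_smul]
    · right; rw [hc, h1, neg_one_smul]
  · rintro (h | h)
    · rw [h]; exact ⟨hg1, (part1 g1 hg1).mpr ⟨d, hEg1, hdmin⟩⟩
    · rw [h]
      have hunit : (-g1) ⬝ᵥ (-g1) = 1 := by
        rw [neg_dotProduct, dotProduct_neg, neg_neg, hg1]
      refine ⟨hunit, (part1 (-g1) hunit).mpr ⟨d, ?_, hdmin⟩⟩
      rw [mulVec_neg, hEg1, smul_neg]
end

section
/- Let Q be a probability measure on the unit sphere of ℂ^{k−1} and let μ = ∫ z z* Q(dz) be the (k−1)×(k−1) Hermitian second moment matrix. Then a unit vector w ∈ ℂ^{k−1} maximizes the Fréchet function F(w) = ∫ ‖w w* − z z*‖₀² Q(dz) over unit vectors if and only if w is an eigenvector of μ corresponding to its smallest eigenvalue λ. Moreover, the maximizer is unique up to multiplication by a unit complex scalar — i.e., Q is α-VW-nonfocal with VW antimean αμ_{j,E}(Q) = [m] ∈ ℂP^{k−2}, where m is a unit eigenvector of μ for λ — if and only if λ is a simple eigenvalue of μ. -/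
open Matrix MeasureTheory

set_option linter.unusedSectionVars false
set_option maxHeartbeats 1000000

namespace VWAux

variable {n : Type*} [Fintype n]

lemma star_dot_self (u : n → ℂ) :
    star u ⬝ᵥ u = ((∑ i, Complex.normSq (u i) : ℝ) : ℂ) := by
  push_cast
  refine Finset.sum_congr rfl fun i _ => ?_
  simp [Complex.normSq_eq_conj_mul_self]

lemma star_dot_comm (a b : n → ℂ) :
    star a ⬝ᵥ b = starRingEnd ℂ (star b ⬝ᵥ a) := by
  simp only [dotProduct, map_sum, Pi.star_apply, RCLike.star_def, _root_.map_mul,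
    Complex.conj_conj]
  exact Finset.sum_congr rfl fun i _ => mul_comm _ _

lemma unit_ne_zero (u : n → ℂ) (hu : star u ⬝ᵥ u = 1) : u ≠ 0 := fun h => by
  simp [h] at hu

lemma smul_unit_dot (c : ℂ) (v : n → ℂ) :
    star (c • v) ⬝ᵥ (c • v) = ((Complex.normSq c : ℝ) : ℂ) * (star v ⬝ᵥ v) := by
  rw [star_smul, smul_dotProduct, dotProduct_smul, smul_eq_mul, smul_eq_mul, ← mul_assoc,
    show (star c) = (starRingEnd ℂ) c from rfl, ← Complex.normSq_eq_conj_mul_self]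

section Herm

variable [DecidableEq n]

lemma dot_unitary (A : Matrix n n ℂ) (hA : A.IsHermitian) (u : n → ℂ) :
    star (star (hA.eigenvectorUnitary : Matrix n n ℂ) *ᵥ u) ⬝ᵥ
      (star (hA.eigenvectorUnitary : Matrix n n ℂ) *ᵥ u) = star u ⬝ᵥ u := by
  set U := (hA.eigenvectorUnitary : Matrix n n ℂ)
  have hU : U * star U = 1 := Matrix.mem_unitaryGroup_iff.mp hA.eigenvectorUnitary.2
  rw [star_mulVec, show (star U)ᴴ = U from by rw [← Matrix.star_eq_conjTranspose, star_star],
    dotProduct_mulVec, vecMul_vecMul, hU, vecMul_one]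

lemma rayleigh_expand (A : Matrix n n ℂ) (hA : A.IsHermitian) (u : n → ℂ) :
    star u ⬝ᵥ (A *ᵥ u) =
      ((∑ i, hA.eigenvalues i *
        Complex.normSq ((star (hA.eigenvectorUnitary : Matrix n n ℂ) *ᵥ u) i) : ℝ) : ℂ) := by
  set U := (hA.eigenvectorUnitary : Matrix n n ℂ)
  set c := star U *ᵥ u with hc
  have h1 : star u ⬝ᵥ (A *ᵥ u)
      = star c ⬝ᵥ (diagonal (RCLike.ofReal ∘ hA.eigenvalues) *ᵥ c) := by
    conv_lhs => rw [hA.spectral_theorem, Unitary.conjStarAlgAut_apply]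
    rw [← Matrix.mulVec_mulVec, ← Matrix.mulVec_mulVec, dotProduct_mulVec, hc,
      star_mulVec, show (star U)ᴴ = U from by rw [← Matrix.star_eq_conjTranspose, star_star]]
  rw [h1]
  push_cast
  simp only [dotProduct, mulVec_diagonal, Function.comp_apply]
  refine Finset.sum_congr rfl fun i _ => ?_
  have : ((Complex.normSq (c i) : ℝ) : ℂ) = (starRingEnd ℂ) (c i) * c i :=
    Complex.normSq_eq_conj_mul_self
  rw [show (RCLike.ofReal (hA.eigenvalues i) : ℂ) = ((hA.eigenvalues i : ℝ) : ℂ) from rfl]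
  push_cast [this]
  simp only [Pi.star_apply, RCLike.star_def]
  ring

lemma sum_normSq_unitary (A : Matrix n n ℂ) (hA : A.IsHermitian) (u : n → ℂ)
    (hu : star u ⬝ᵥ u = 1) :
    ∑ i, Complex.normSq ((star (hA.eigenvectorUnitary : Matrix n n ℂ) *ᵥ u) i) = 1 := by
  have h := dot_unitary A hA u
  rw [hu, star_dot_self] at h
  exact_mod_cast h

lemma basis_unit (A : Matrix n n ℂ) (hA : A.IsHermitian) (i : n) :
    star ⇑(hA.eigenvectorBasis i) ⬝ᵥ ⇑(hA.eigenvectorBasis i) = 1 := by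
  set U := (hA.eigenvectorUnitary : Matrix n n ℂ)
  have hU : star U * U = 1 := Matrix.mem_unitaryGroup_iff'.mp hA.eigenvectorUnitary.2
  have h := congrFun (congrFun hU i) i
  simpa [Matrix.mul_apply, Matrix.one_apply, dotProduct, Matrix.star_apply,
    Matrix.IsHermitian.eigenvectorUnitary_apply, mul_comm, U] using h

lemma basis_eigen (A : Matrix n n ℂ) (hA : A.IsHermitian) (i : n) :
    A *ᵥ ⇑(hA.eigenvectorBasis i) = ((hA.eigenvalues i : ℝ) : ℂ) • ⇑(hA.eigenvectorBasis i) := by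
  have h := hA.mulVec_eigenvectorBasis i
  rw [h]
  funext j
  simp [Complex.real_smul]

lemma eigen_rayleigh (A : Matrix n n ℂ) (lam : ℝ) (w : n → ℂ)
    (hw : star w ⬝ᵥ w = 1) (he : A *ᵥ w = (lam : ℂ) • w) :
    (star w ⬝ᵥ (A *ᵥ w)).re = lam := by
  rw [he, dotProduct_smul, hw]
  simp

lemma rayleigh_lb (A : Matrix n n ℂ) (hA : A.IsHermitian) (lam : ℝ)
    (hle : ∀ i, lam ≤ hA.eigenvalues i) (u : n → ℂ) (hu : star u ⬝ᵥ u = 1) :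
    lam ≤ (star u ⬝ᵥ (A *ᵥ u)).re := by
  rw [rayleigh_expand A hA u, Complex.ofReal_re]
  calc lam = lam * ∑ i, Complex.normSq ((star (hA.eigenvectorUnitary : Matrix n n ℂ) *ᵥ u) i) := by
        rw [sum_normSq_unitary A hA u hu, mul_one]
    _ ≤ _ := by
        rw [Finset.mul_sum]
        exact Finset.sum_le_sum fun i _ =>
          mul_le_mul_of_nonneg_right (hle i) (Complex.normSq_nonneg _)

lemma min_le_eigenvalues (A : Matrix n n ℂ) (hA : A.IsHermitian) (lam : ℝ)
    (hmin : ∀ (c : ℝ) (v : n → ℂ), v ≠ 0 → A *ᵥ v = (c : ℂ) • v → lam ≤ c) (i : n) :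
    lam ≤ hA.eigenvalues i := by
  refine hmin _ _ (fun h => ?_) (basis_eigen A hA i)
  have := basis_unit A hA i
  rw [h] at this
  simp at this

lemma eigen_of_rayleigh_eq (A : Matrix n n ℂ) (hA : A.IsHermitian) (lam : ℝ)
    (hle : ∀ i, lam ≤ hA.eigenvalues i) (u : n → ℂ) (hu : star u ⬝ᵥ u = 1)
    (heq : (star u ⬝ᵥ (A *ᵥ u)).re = lam) :
    A *ᵥ u = (lam : ℂ) • u := by
  set U := (hA.eigenvectorUnitary : Matrix n n ℂ)
  set c := star U *ᵥ u with hc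
  have hsum1 : ∑ i, Complex.normSq (c i) = 1 := sum_normSq_unitary A hA u hu
  have hsum : ∑ i, hA.eigenvalues i * Complex.normSq (c i) = lam := by
    have := rayleigh_expand A hA u
    rw [this, Complex.ofReal_re] at heq
    exact heq
  have hzero : ∀ i ∈ Finset.univ, (hA.eigenvalues i - lam) * Complex.normSq (c i) = 0 := by
    rw [← Finset.sum_eq_zero_iff_of_nonneg (fun i _ =>
      mul_nonneg (sub_nonneg.mpr (hle i)) (Complex.normSq_nonneg _))]
    have : ∑ i, (hA.eigenvalues i - lam) * Complex.normSq (c i)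
        = (∑ i, hA.eigenvalues i * Complex.normSq (c i)) - lam * ∑ i, Complex.normSq (c i) := by
      rw [Finset.mul_sum, ← Finset.sum_sub_distrib]
      exact Finset.sum_congr rfl fun i _ => by ring
    rw [this, hsum, hsum1, mul_one, sub_self]
  have hkey : ∀ i, ((hA.eigenvalues i : ℝ) : ℂ) * c i = (lam : ℂ) * c i := by
    intro i
    rcases mul_eq_zero.mp (hzero i (Finset.mem_univ i)) with h | h
    · rw [sub_eq_zero.mp h]
    · rw [Complex.normSq_eq_zero.mp h, mul_zero, mul_zero]
  have hU : U * star U = 1 := Matrix.mem_unitaryGroup_iff.mp hA.eigenvectorUnitary.2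
  have hUc : U *ᵥ c = u := by
    rw [hc, Matrix.mulVec_mulVec, hU, Matrix.one_mulVec]
  conv_lhs => rw [hA.spectral_theorem, Unitary.conjStarAlgAut_apply]
  rw [← Matrix.mulVec_mulVec, ← Matrix.mulVec_mulVec, ← hc]
  have hdiag : diagonal (RCLike.ofReal ∘ hA.eigenvalues) *ᵥ c = (lam : ℂ) • c := by
    funext i
    rw [mulVec_diagonal]
    exact hkey i
  rw [hdiag, Matrix.mulVec_smul, hUc]

lemma normalize_eigen (A : Matrix n n ℂ) (c : ℝ) (v : n → ℂ) (hv : v ≠ 0)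
    (he : A *ᵥ v = (c : ℂ) • v) :
    ∃ (w : n → ℂ) (t : ℝ), 0 < t ∧ star w ⬝ᵥ w = 1 ∧ A *ᵥ w = (c : ℂ) • w ∧
      v = (t : ℂ) • w := by
  set s := ∑ i, Complex.normSq (v i) with hsdef
  have hs : 0 < s := by
    have hex : ∃ i, v i ≠ 0 := by
      by_contra h; push_neg at h; exact hv (funext h)
    obtain ⟨i, hi⟩ := hex
    exact Finset.sum_pos' (fun j _ => Complex.normSq_nonneg _)
      ⟨i, Finset.mem_univ i, Complex.normSq_pos.mpr hi⟩
  set t := Real.sqrt s with htdef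
  have ht : 0 < t := Real.sqrt_pos.mpr hs
  have htc : ((t : ℂ)) ≠ 0 := Complex.ofReal_ne_zero.mpr ht.ne'
  refine ⟨((t : ℂ))⁻¹ • v, t, ht, ?_, ?_, ?_⟩
  · have hts : t * t = s := Real.mul_self_sqrt hs.le
    rw [smul_unit_dot, star_dot_self, ← hsdef]
    have h1 : Complex.normSq (((t : ℂ))⁻¹) = t⁻¹ * t⁻¹ := by
      rw [← Complex.ofReal_inv]
      simp [Complex.normSq_ofReal]
    rw [h1, ← Complex.ofReal_mul,
      show t⁻¹ * t⁻¹ * s = 1 from by field_simp; linarith, Complex.ofReal_one]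
  · rw [mulVec_smul, he, smul_comm]
  · rw [smul_smul, mul_inv_cancel₀ htc, one_smul]

end Herm

lemma trace_vmv (a b c d : n → ℂ) :
    Matrix.trace (vecMulVec a b * vecMulVec c d) = (b ⬝ᵥ c) * (d ⬝ᵥ a) := by
  simp only [Matrix.trace, Matrix.diag_apply, Matrix.mul_apply, vecMulVec_apply, dotProduct]
  rw [Finset.sum_mul_sum, Finset.sum_comm]
  exact Finset.sum_congr rfl fun j _ => Finset.sum_congr rfl fun i _ => by ring

lemma herm_vmv (x : n → ℂ) : (vecMulVec x (star x))ᴴ = vecMulVec x (star x) := by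
  ext i j
  simp [conjTranspose_apply, vecMulVec_apply, mul_comm]

lemma trace_formula (u z : n → ℂ) (hu : star u ⬝ᵥ u = 1) (hz : star z ⬝ᵥ z = 1) :
    (Matrix.trace ((vecMulVec u (star u) - vecMulVec z (star z)) *
        (vecMulVec u (star u) - vecMulVec z (star z))ᴴ)).re
      = 2 - 2 * Complex.normSq (star u ⬝ᵥ z) := by
  rw [conjTranspose_sub, herm_vmv, herm_vmv, sub_mul, mul_sub, mul_sub, trace_sub, trace_sub,
    trace_sub, trace_vmv, trace_vmv, trace_vmv, trace_vmv, hu, hz, star_dot_comm z u,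
    Complex.mul_conj]
  have h2 : (starRingEnd ℂ) (star u ⬝ᵥ z) * (star u ⬝ᵥ z)
      = (Complex.normSq (star u ⬝ᵥ z) : ℂ) := Complex.normSq_eq_conj_mul_self.symm
  rw [h2]
  have : (1 * 1 - (Complex.normSq (star u ⬝ᵥ z) : ℂ) -
      ((Complex.normSq (star u ⬝ᵥ z) : ℂ) - 1 * 1))
      = ((2 - 2 * Complex.normSq (star u ⬝ᵥ z) : ℝ) : ℂ) := by
    push_cast; ring
  rw [this, Complex.ofReal_re]

lemma sphere_coord_bound (z : {z : n → ℂ // star z ⬝ᵥ z = 1}) (i : n) : ‖z.1 i‖ ≤ 1 := by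
  have h := z.2
  rw [star_dot_self] at h
  have hsum : ∑ j, Complex.normSq (z.1 j) = 1 := by exact_mod_cast h
  have hle : Complex.normSq (z.1 i) ≤ 1 := by
    rw [← hsum]
    exact Finset.single_le_sum (fun j _ => Complex.normSq_nonneg _) (Finset.mem_univ i)
  have h2 : ‖z.1 i‖ ^ 2 = Complex.normSq (z.1 i) := by
    rw [← Complex.sq_norm]
  nlinarith [norm_nonneg (z.1 i)]

lemma meas_coord (i : n) : Measurable (fun z : {z : n → ℂ // star z ⬝ᵥ z = 1} => z.1 i) :=
  (measurable_pi_apply i).comp measurable_subtype_coe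

lemma integrable_entry (Q : Measure {z : n → ℂ // star z ⬝ᵥ z = 1}) [IsProbabilityMeasure Q]
    (i j : n) :
    Integrable (fun z : {z : n → ℂ // star z ⬝ᵥ z = 1} => z.1 i * star (z.1 j)) Q := by
  refine ⟨((meas_coord i).mul
      (Complex.continuous_conj.measurable.comp (meas_coord j))).aestronglyMeasurable,
    HasFiniteIntegral.of_bounded (C := 1) (ae_of_all _ fun z => ?_)⟩
  rw [norm_mul, norm_star]
  exact mul_le_one₀ (sphere_coord_bound z i) (norm_nonneg _) (sphere_coord_bound z j)

lemma F_integral (Q : Measure {z : n → ℂ // star z ⬝ᵥ z = 1}) [IsProbabilityMeasure Q]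
    (μ : Matrix n n ℂ)
    (hμ : ∀ i j, μ i j = ∫ z, (z : {z : n → ℂ // star z ⬝ᵥ z = 1}).1 i * star (z.1 j) ∂Q)
    (u : n → ℂ) (hu : star u ⬝ᵥ u = 1) :
    (∫ z, (Matrix.trace ((vecMulVec u (star u) - vecMulVec z.1 (star z.1)) *
        (vecMulVec u (star u) - vecMulVec z.1 (star z.1))ᴴ)).re ∂Q)
      = 2 - 2 * (star u ⬝ᵥ (μ *ᵥ u)).re := by
  set S := {z : n → ℂ // star z ⬝ᵥ z = 1}
  set h : S → ℂ := fun z => ∑ i, ∑ j, (starRingEnd ℂ) (u i) * u j * (z.1 i * star (z.1 j))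
    with hh
  have hns : ∀ z : S, Complex.normSq (star u ⬝ᵥ z.1) = (h z).re := by
    intro z
    have key : h z = (star u ⬝ᵥ z.1) * (star z.1 ⬝ᵥ u) := by
      rw [hh]
      simp only [dotProduct, Finset.sum_mul_sum, Pi.star_apply, RCLike.star_def]
      exact Finset.sum_congr rfl fun i _ => Finset.sum_congr rfl fun j _ => by ring
    rw [key, star_dot_comm z.1 u, Complex.mul_conj, Complex.ofReal_re]
  have hInth : Integrable h Q := by
    rw [hh]
    refine integrable_finset_sum _ fun i _ => integrable_finset_sum _ fun j _ => ?_
    exact (integrable_entry Q i j).const_mul _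
  have hg : Integrable (fun z : S => Complex.normSq (star u ⬝ᵥ z.1)) Q := by
    have : (fun z : S => Complex.normSq (star u ⬝ᵥ z.1)) = fun z => (h z).re :=
      funext fun z => hns z
    rw [this]
    simpa using hInth.re
  have hIh : ∫ z, h z ∂Q = ∑ i, ∑ j, (starRingEnd ℂ) (u i) * u j * μ i j := by
    rw [hh, integral_finset_sum _ fun i _ =>
      integrable_finset_sum _ fun j _ => (integrable_entry Q i j).const_mul _]
    refine Finset.sum_congr rfl fun i _ => ?_
    rw [integral_finset_sum _ fun j _ => (integrable_entry Q i j).const_mul _]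
    refine Finset.sum_congr rfl fun j _ => ?_
    rw [integral_const_mul, hμ i j]
  have hμu : star u ⬝ᵥ (μ *ᵥ u) = ∑ i, ∑ j, (starRingEnd ℂ) (u i) * u j * μ i j := by
    simp only [dotProduct, mulVec, dotProduct, Pi.star_apply, RCLike.star_def, Finset.mul_sum]
    exact Finset.sum_congr rfl fun i _ => Finset.sum_congr rfl fun j _ => by ring
  have hgval : ∫ z, Complex.normSq (star u ⬝ᵥ z.1) ∂Q = (star u ⬝ᵥ (μ *ᵥ u)).re := by
    have heq : (fun z : S => Complex.normSq (star u ⬝ᵥ z.1)) = fun z => (h z).re :=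
      funext fun z => hns z
    rw [heq]
    have := integral_re (f := h) (μ := Q) hInth
    simp only [RCLike.re_to_complex] at this
    rw [this, hIh, hμu]
  have hpt : (fun z : S => (Matrix.trace ((vecMulVec u (star u) - vecMulVec z.1 (star z.1)) *
        (vecMulVec u (star u) - vecMulVec z.1 (star z.1))ᴴ)).re)
      = fun z : S => 2 - 2 * Complex.normSq (star u ⬝ᵥ z.1) :=
    funext fun z => trace_formula u z.1 hu z.2
  rw [hpt, integral_sub (integrable_const 2) (hg.const_mul 2), integral_const,
    integral_const_mul, hgval]
  simp

end VWAux


/-- Let `Q` be a probability measure on the unit sphere of `ℂ^{k-1}` with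
Hermitian second moment matrix `μ = ∫ z z* dQ`. A unit vector `w` maximizes the Fréchet
function `F(w) = ∫ ‖w w* - z z*‖₀² dQ(z)` over unit vectors iff `w` is an eigenvector
of `μ` for its smallest eigenvalue `λ`; and the maximizer is unique up to a unit complex
scalar (i.e. `Q` is α-VW-nonfocal with VW antimean `[m] ∈ ℂP^{k-2}`, `m` a unit
`λ`-eigenvector) iff `λ` is a simple eigenvalue of `μ`. -/
theorem vw_antimean_complex (k : ℕ) (hk : 2 ≤ k)
    (Q : Measure {z : Fin (k - 1) → ℂ // star z ⬝ᵥ z = 1}) [IsProbabilityMeasure Q]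
    (μ : Matrix (Fin (k - 1)) (Fin (k - 1)) ℂ)
    (hμ : ∀ i j, μ i j =
      ∫ z, (z : {z : Fin (k - 1) → ℂ // star z ⬝ᵥ z = 1}).1 i * star (z.1 j) ∂Q) :
    (∀ w : Fin (k - 1) → ℂ, star w ⬝ᵥ w = 1 →
      ((∀ u : Fin (k - 1) → ℂ, star u ⬝ᵥ u = 1 →
          (∫ z, (Matrix.trace ((vecMulVec u (star u) - vecMulVec z.1 (star z.1)) *
              (vecMulVec u (star u) - vecMulVec z.1 (star z.1))ᴴ)).re ∂Q)
            ≤ ∫ z, (Matrix.trace ((vecMulVec w (star w) - vecMulVec z.1 (star z.1)) *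
              (vecMulVec w (star w) - vecMulVec z.1 (star z.1))ᴴ)).re ∂Q) ↔
        (∃ lam : ℝ, μ *ᵥ w = (lam : ℂ) • w ∧
          ∀ (c : ℝ) (v : Fin (k - 1) → ℂ), v ≠ 0 → μ *ᵥ v = (c : ℂ) • v → lam ≤ c))) ∧
    (∀ (lam : ℝ) (mv : Fin (k - 1) → ℂ), star mv ⬝ᵥ mv = 1 →
      μ *ᵥ mv = (lam : ℂ) • mv →
      (∀ (c : ℝ) (v : Fin (k - 1) → ℂ), v ≠ 0 → μ *ᵥ v = (c : ℂ) • v → lam ≤ c) →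
      (({w : Fin (k - 1) → ℂ | star w ⬝ᵥ w = 1 ∧ ∀ u : Fin (k - 1) → ℂ, star u ⬝ᵥ u = 1 →
            (∫ z, (Matrix.trace ((vecMulVec u (star u) - vecMulVec z.1 (star z.1)) *
                (vecMulVec u (star u) - vecMulVec z.1 (star z.1))ᴴ)).re ∂Q)
              ≤ ∫ z, (Matrix.trace ((vecMulVec w (star w) - vecMulVec z.1 (star z.1)) *
                (vecMulVec w (star w) - vecMulVec z.1 (star z.1))ᴴ)).re ∂Q}
          = {w : Fin (k - 1) → ℂ | ∃ ζ : ℂ, ‖ζ‖ = 1 ∧ w = ζ • mv}) ↔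
        (∀ v : Fin (k - 1) → ℂ, μ *ᵥ v = (lam : ℂ) • v → ∃ c : ℂ, v = c • mv))) := by
  have hkpos : 0 < k - 1 := by omega
  haveI : Nonempty (Fin (k - 1)) := ⟨⟨0, hkpos⟩⟩
  have hH : μ.IsHermitian := by
    show μᴴ = μ
    ext i j
    rw [conjTranspose_apply, hμ j i, hμ i j, RCLike.star_def, ← integral_conj]
    congr 1
    funext z
    simp [mul_comm]
  have key : ∀ w : Fin (k - 1) → ℂ, star w ⬝ᵥ w = 1 →
      ((∀ u : Fin (k - 1) → ℂ, star u ⬝ᵥ u = 1 →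
          (∫ z, (Matrix.trace ((vecMulVec u (star u) - vecMulVec z.1 (star z.1)) *
              (vecMulVec u (star u) - vecMulVec z.1 (star z.1))ᴴ)).re ∂Q)
            ≤ ∫ z, (Matrix.trace ((vecMulVec w (star w) - vecMulVec z.1 (star z.1)) *
              (vecMulVec w (star w) - vecMulVec z.1 (star z.1))ᴴ)).re ∂Q) ↔
        (∃ lam : ℝ, μ *ᵥ w = (lam : ℂ) • w ∧
          ∀ (c : ℝ) (v : Fin (k - 1) → ℂ), v ≠ 0 → μ *ᵥ v = (c : ℂ) • v → lam ≤ c)) := by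
    intro w hw
    constructor
    · intro hmax
      obtain ⟨i0, -, hi0⟩ := Finset.exists_min_image Finset.univ hH.eigenvalues
        Finset.univ_nonempty
      set lam0 := hH.eigenvalues i0 with hlam0
      have hle : ∀ i, lam0 ≤ hH.eigenvalues i := fun i => hi0 i (Finset.mem_univ i)
      set b0 := ⇑(hH.eigenvectorBasis i0) with hb0
      have hb0u : star b0 ⬝ᵥ b0 = 1 := VWAux.basis_unit μ hH i0
      have hb0e : μ *ᵥ b0 = ((lam0 : ℝ) : ℂ) • b0 := VWAux.basis_eigen μ hH i0
      have hminprop : ∀ (c : ℝ) (v : Fin (k - 1) → ℂ), v ≠ 0 →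
          μ *ᵥ v = (c : ℂ) • v → lam0 ≤ c := by
        intro c v hv he
        obtain ⟨w', t, ht, hw'u, hw'e, hv'⟩ := VWAux.normalize_eigen μ c v hv he
        have h1 : lam0 ≤ (star w' ⬝ᵥ (μ *ᵥ w')).re := VWAux.rayleigh_lb μ hH lam0 hle w' hw'u
        have h2 : (star w' ⬝ᵥ (μ *ᵥ w')).re = c := VWAux.eigen_rayleigh μ c w' hw'u hw'e
        linarith
      have h1 := hmax b0 hb0u
      rw [VWAux.F_integral Q μ hμ b0 hb0u, VWAux.F_integral Q μ hμ w hw] at h1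
      have h2 : (star b0 ⬝ᵥ (μ *ᵥ b0)).re = lam0 := VWAux.eigen_rayleigh μ lam0 b0 hb0u hb0e
      have h3 : lam0 ≤ (star w ⬝ᵥ (μ *ᵥ w)).re := VWAux.rayleigh_lb μ hH lam0 hle w hw
      have h4 : (star w ⬝ᵥ (μ *ᵥ w)).re = lam0 := by linarith
      exact ⟨lam0, VWAux.eigen_of_rayleigh_eq μ hH lam0 hle w hw h4, hminprop⟩
    · rintro ⟨lam, heig, hmin⟩ u hu
      have hle := VWAux.min_le_eigenvalues μ hH lam hmin
      rw [VWAux.F_integral Q μ hμ u hu, VWAux.F_integral Q μ hμ w hw]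
      have h1 : lam ≤ (star u ⬝ᵥ (μ *ᵥ u)).re := VWAux.rayleigh_lb μ hH lam hle u hu
      have h2 : (star w ⬝ᵥ (μ *ᵥ w)).re = lam := VWAux.eigen_rayleigh μ lam w hw heig
      linarith
  refine ⟨key, ?_⟩
  intro lam mv hmvu hmve hmin
  have hmv0 : mv ≠ 0 := VWAux.unit_ne_zero mv hmvu
  have hchar : ∀ w : Fin (k - 1) → ℂ,
      (star w ⬝ᵥ w = 1 ∧ ∀ u : Fin (k - 1) → ℂ, star u ⬝ᵥ u = 1 →
          (∫ z, (Matrix.trace ((vecMulVec u (star u) - vecMulVec z.1 (star z.1)) *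
              (vecMulVec u (star u) - vecMulVec z.1 (star z.1))ᴴ)).re ∂Q)
            ≤ ∫ z, (Matrix.trace ((vecMulVec w (star w) - vecMulVec z.1 (star z.1)) *
              (vecMulVec w (star w) - vecMulVec z.1 (star z.1))ᴴ)).re ∂Q) ↔
      (star w ⬝ᵥ w = 1 ∧ μ *ᵥ w = (lam : ℂ) • w) := by
    intro w
    constructor
    · rintro ⟨hw, hmax⟩
      obtain ⟨lam', he', hmin'⟩ := (key w hw).mp hmax
      have h1 : lam' ≤ lam := hmin' lam mv hmv0 hmve
      have h2 : lam ≤ lam' := hmin lam' w (VWAux.unit_ne_zero w hw) he'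
      have h3 : lam' = lam := le_antisymm h1 h2
      exact ⟨hw, h3 ▸ he'⟩
    · rintro ⟨hw, he⟩
      exact ⟨hw, (key w hw).mpr ⟨lam, he, hmin⟩⟩
  constructor
  · intro hset v hev
    by_cases hv : v = 0
    · exact ⟨0, by simp [hv]⟩
    · obtain ⟨w, t, ht, hwu, hwe, hvw⟩ := VWAux.normalize_eigen μ lam v hv hev
      have hwmem : w ∈ {w : Fin (k - 1) → ℂ | star w ⬝ᵥ w = 1 ∧
          ∀ u : Fin (k - 1) → ℂ, star u ⬝ᵥ u = 1 →
            (∫ z, (Matrix.trace ((vecMulVec u (star u) - vecMulVec z.1 (star z.1)) *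
                (vecMulVec u (star u) - vecMulVec z.1 (star z.1))ᴴ)).re ∂Q)
              ≤ ∫ z, (Matrix.trace ((vecMulVec w (star w) - vecMulVec z.1 (star z.1)) *
                (vecMulVec w (star w) - vecMulVec z.1 (star z.1))ᴴ)).re ∂Q} := by
        rw [Set.mem_setOf_eq]
        exact (hchar w).mpr ⟨hwu, hwe⟩
      rw [hset] at hwmem
      obtain ⟨ζ, hζ, hwz⟩ := hwmem
      exact ⟨(t : ℂ) * ζ, by rw [hvw, hwz, smul_smul]⟩
  · intro hsimple
    ext w
    simp only [Set.mem_setOf_eq]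
    constructor
    · rintro ⟨hw, hmax⟩
      have hc := (hchar w).mp ⟨hw, hmax⟩
      obtain ⟨c, hcc⟩ := hsimple w hc.2
      refine ⟨c, ?_, hcc⟩
      have h1 : star w ⬝ᵥ w = ((Complex.normSq c : ℝ) : ℂ) := by
        rw [hcc, VWAux.smul_unit_dot, hmvu, mul_one]
      rw [hw] at h1
      have h2 : Complex.normSq c = 1 := by exact_mod_cast h1.symm
      have h3 : ‖c‖ ^ 2 = 1 := by rw [← Complex.sq_norm] at h2; exact_mod_cast h2
      nlinarith [norm_nonneg c]
    · rintro ⟨ζ, hζ, rfl⟩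
      have hunit : star (ζ • mv) ⬝ᵥ (ζ • mv) = 1 := by
        rw [VWAux.smul_unit_dot, hmvu, mul_one]
        have : Complex.normSq ζ = 1 := by
          rw [← Complex.sq_norm]
          rw [hζ]
          norm_num
        rw [this]
        norm_num
      have heig : μ *ᵥ (ζ • mv) = (lam : ℂ) • (ζ • mv) := by
        rw [mulVec_smul, hmve, smul_comm]
      exact ⟨hunit, ((hchar _).mpr ⟨hunit, heig⟩).2⟩
end
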